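/- arXiv:1004.4721 — 5 statements merged into one kernel-verified Lean document; each statement's English description precedes it below -/
import Mathlib

section
/- Let R be a skew-invertible R-matrix on V⊗V with V = ℂ^N satisfying the Hecke condition with parameter q, let B := Tr₍₁₎(Ψ) with entries B_p^j in the standard basis, and let η ∈ ℂ∖{0}. Define endomorphisms A_i^j ∈ End(V), 1 ≤ i,j ≤ N, by A_i^j(e_p) = η·(δ_i^j e_p − (q−q⁻¹) B_p^j e_i). Then the N×N matrix Λ with entries Λ_i^j = A_i^j in the (noncommutative) algebra End(V) satisfies the reflection equation R₁Λ₁R₁Λ₁ = Λ₁R₁Λ₁R₁ in Mat_{N²}(End(V)); i.e., the assignment L_i^j ↦ A_i^j defines a representation of the reflection equation algebra on V. -/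
open Matrix BigOperators

/-- `X₁ = X ⊗ id` acting on the factors 1,2 of `(ℂ^N)^{⊗3}`. -/
noncomputable def up12 {N : ℕ} (X : Matrix (Fin N × Fin N) (Fin N × Fin N) ℂ) :
    Matrix (Fin N × Fin N × Fin N) (Fin N × Fin N × Fin N) ℂ :=
  Matrix.of fun p q => X (p.1, p.2.1) (q.1, q.2.1) * (if p.2.2 = q.2.2 then 1 else 0)

/-- `X₂ = id ⊗ X` acting on the factors 2,3 of `(ℂ^N)^{⊗3}`. -/
noncomputable def up23 {N : ℕ} (X : Matrix (Fin N × Fin N) (Fin N × Fin N) ℂ) :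
    Matrix (Fin N × Fin N × Fin N) (Fin N × Fin N × Fin N) ℂ :=
  Matrix.of fun p q => (if p.1 = q.1 then 1 else 0) * X (p.2.1, p.2.2) (q.2.1, q.2.2)

/-- The partial trace over the middle factor of `V^{⊗3}`. -/
noncomputable def ptrMid {N : ℕ}
    (Y : Matrix (Fin N × Fin N × Fin N) (Fin N × Fin N × Fin N) ℂ) :
    Matrix (Fin N × Fin N) (Fin N × Fin N) ℂ :=
  Matrix.of fun a d => ∑ b : Fin N, Y (a.1, b, a.2) (d.1, b, d.2)

/-- The flip `P₁₃` on factors 1 and 3. -/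
noncomputable def flip13 (N : ℕ) : Matrix (Fin N × Fin N) (Fin N × Fin N) ℂ :=
  Matrix.of fun p q => if p.1 = q.2 ∧ p.2 = q.1 then 1 else 0

/-- `B = Tr₍₁₎(Ψ)`, with entries `B_p^j = Σ_a Ψ_{ap}^{aj}`. -/
noncomputable def Bmat {N : ℕ} (Ψ : Matrix (Fin N × Fin N) (Fin N × Fin N) ℂ) :
    Matrix (Fin N) (Fin N) ℂ :=
  Matrix.of fun p j => ∑ a : Fin N, Ψ (a, p) (a, j)

/-- `X₁ = X ⊗ I_N` for a matrix with entries in a (noncommutative) algebra. -/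
def lift1 {N : ℕ} {A : Type} [Ring A] (X : Matrix (Fin N) (Fin N) A) :
    Matrix (Fin N × Fin N) (Fin N × Fin N) A :=
  Matrix.of fun p q => X p.1 q.1 * (if p.2 = q.2 then 1 else 0)

/-- The endomorphism `A_i^j ∈ End(V)` defined by
`A_i^j(e_p) = η (δ_i^j e_p − (q − q⁻¹) B_p^j e_i)`, encoded as the matrix whose
`(r,p)` entry is the coefficient of `e_r` in `A_i^j(e_p)`. -/
noncomputable def Aop {N : ℕ} (Ψ : Matrix (Fin N × Fin N) (Fin N × Fin N) ℂ)
    (q η : ℂ) (i j : Fin N) : Matrix (Fin N) (Fin N) ℂ :=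
  Matrix.of fun r p =>
    η * ((if i = j then 1 else 0) * (if r = p then 1 else 0)
      - (q - q⁻¹) * Bmat Ψ p j * (if r = i then 1 else 0))

lemma re_key {A : Type} [Ring A] [Algebra ℂ A] (X K : A) (l η : ℂ)
    (h2 : X * X = 1 + l • X) (h3 : K * X * K = K) :
    X * (η • (1 - l • K)) * X * (η • (1 - l • K))
      = (η • (1 - l • K)) * X * (η • (1 - l • K)) * X := by
  set J : A := l • K with hJdef
  have hJ : J * X * J = l • J := by
    rw [hJdef, smul_mul_assoc, smul_mul_assoc, mul_smul_comm, h3, smul_comm]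
  have c1 : X * X * J = J + l • (X * J) := by
    rw [h2, add_mul, one_mul, smul_mul_assoc]
  have c2 : J * (X * X) = J + l • (J * X) := by
    rw [h2, mul_add, mul_one, mul_smul_comm]
  have c3 : X * J * X * J = l • (X * J) := by
    have : X * J * X * J = X * (J * X * J) := by noncomm_ring
    rw [this, hJ, mul_smul_comm]
  have c4 : J * X * J * X = l • (J * X) := by
    rw [hJ, smul_mul_assoc]
  have core : X * (1 - J) * X * (1 - J) = (1 - J) * X * (1 - J) * X := by
    calc X * (1 - J) * X * (1 - J)
        = X * X - X * J * X - X * X * J + X * J * X * J := by noncomm_ring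
      _ = X * X - X * J * X - (J + l • (X * J)) + l • (X * J) := by rw [c1, c3]
      _ = X * X - X * J * X - J := by abel
      _ = X * X - X * J * X - (J + l • (J * X)) + l • (J * X) := by abel
      _ = X * X - X * J * X - J * (X * X) + J * X * J * X := by rw [c2, c4]
      _ = (1 - J) * X * (1 - J) * X := by noncomm_ring
  calc X * (η • (1 - J)) * X * (η • (1 - J))
      = (η * η) • (X * (1 - J) * X * (1 - J)) := by
        simp only [mul_smul_comm, smul_mul_assoc, smul_smul]
    _ = (η * η) • ((1 - J) * X * (1 - J) * X) := by rw [core]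
    _ = (η • (1 - J)) * X * (η • (1 - J)) * X := by
        simp only [mul_smul_comm, smul_mul_assoc, smul_smul]

/-- The matrix `Λ` with entries `Λ_i^j = A_i^j` in the noncommutative algebra
`End(V) = Mat_N(ℂ)` satisfies the reflection equation `R₁Λ₁R₁Λ₁ = Λ₁R₁Λ₁R₁`,
i.e. the assignment `L_i^j ↦ A_i^j` is a representation of the reflection
equation algebra on `V`. -/
theorem reflection_rep_on_V (N : ℕ) (hN : 1 ≤ N)
    (R Rinv Ψ : Matrix (Fin N × Fin N) (Fin N × Fin N) ℂ) (q η : ℂ)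
    (hq : q ≠ 0) (hη : η ≠ 0)
    (hYB : up12 R * up23 R * up12 R = up23 R * up12 R * up23 R)
    (hRinv : R * Rinv = 1 ∧ Rinv * R = 1)
    (hHecke : (R - q • (1 : Matrix (Fin N × Fin N) (Fin N × Fin N) ℂ))
        * (R + q⁻¹ • (1 : Matrix (Fin N × Fin N) (Fin N × Fin N) ℂ)) = 0)
    (hskew : ptrMid (up12 R * up23 Ψ) = flip13 N ∧ ptrMid (up12 Ψ * up23 R) = flip13 N) :
    R.map (algebraMap ℂ (Matrix (Fin N) (Fin N) ℂ)) * lift1 (Matrix.of (Aop Ψ q η))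
        * R.map (algebraMap ℂ (Matrix (Fin N) (Fin N) ℂ)) * lift1 (Matrix.of (Aop Ψ q η))
      = lift1 (Matrix.of (Aop Ψ q η)) * R.map (algebraMap ℂ (Matrix (Fin N) (Fin N) ℂ))
        * lift1 (Matrix.of (Aop Ψ q η)) * R.map (algebraMap ℂ (Matrix (Fin N) (Fin N) ℂ)) := by
  classical
  obtain ⟨-, hskew2⟩ := hskew
  -- the key skew-invertibility trace identity: ∑_{b,c} B_{bc} R_{(c,r),(b,p)} = δ_{rp}
  have hI : ∀ r p : Fin N,
      (∑ b : Fin N, ∑ c : Fin N, Bmat Ψ b c * R (c, r) (b, p)) = if r = p then 1 else 0 := by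
    intro r p
    have h : ∀ a : Fin N, (∑ b : Fin N, ∑ c : Fin N, Ψ (a, b) (a, c) * R (c, r) (b, p))
        = (if a = p ∧ r = a then 1 else 0) := by
      intro a
      have h0 : ptrMid (up12 Ψ * up23 R) (a, r) (a, p) = flip13 N (a, r) (a, p) := by
        rw [hskew2]
      simp [ptrMid, up12, up23, flip13, Matrix.mul_apply, Matrix.of_apply,
        Fintype.sum_prod_type, mul_ite, ite_mul, Finset.sum_ite_irrel] at h0
      exact h0
    calc (∑ b : Fin N, ∑ c : Fin N, Bmat Ψ b c * R (c, r) (b, p))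
        = ∑ b : Fin N, ∑ c : Fin N, ∑ a : Fin N, Ψ (a, b) (a, c) * R (c, r) (b, p) := by
          simp only [Bmat, Matrix.of_apply, Finset.sum_mul]
      _ = ∑ b : Fin N, ∑ a : Fin N, ∑ c : Fin N, Ψ (a, b) (a, c) * R (c, r) (b, p) :=
          Finset.sum_congr rfl fun b _ => Finset.sum_comm
      _ = ∑ a : Fin N, ∑ b : Fin N, ∑ c : Fin N, Ψ (a, b) (a, c) * R (c, r) (b, p) :=
          Finset.sum_comm
      _ = ∑ a : Fin N, if a = p ∧ r = a then 1 else 0 := Finset.sum_congr rfl fun a _ => h a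
      _ = if r = p then 1 else 0 := by
          simp [ite_and, Finset.sum_ite_eq, eq_comm]
  -- scalar Hecke relation
  have hH : R * R = 1 + (q - q⁻¹) • R := by
    have h := hHecke
    rw [sub_mul, mul_add, mul_add, smul_mul_assoc, mul_smul_comm, smul_mul_assoc,
      mul_smul_comm, smul_smul, mul_inv_cancel₀ hq, one_smul] at h
    simp only [mul_one, one_mul] at h
    have h' : R * R + q⁻¹ • R = q • R + 1 := sub_eq_zero.mp h
    have h'' : R * R = q • R + 1 - q⁻¹ • R := eq_sub_of_add_eq h'
    rw [h'', sub_smul]; abel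
  set f := algebraMap ℂ (Matrix (Fin N) (Fin N) ℂ) with hf
  set Rm := R.map f with hRm
  have hH' : Rm * Rm = 1 + (q - q⁻¹) • Rm := by
    have hsm : ∀ (c x : ℂ), f (c * x) = c • f x := by
      intro c x; rw [_root_.map_mul, hf, ← Algebra.smul_def]
    rw [hRm, ← Matrix.map_mul, hH]
    ext p r : 1
    simp [Matrix.map_apply, Matrix.add_apply, Matrix.smul_apply, Matrix.one_apply,
      apply_ite f, smul_eq_mul, hsm]
  set K : Matrix (Fin N × Fin N) (Fin N × Fin N) (Matrix (Fin N) (Fin N) ℂ) :=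
    Matrix.of fun p q => Matrix.of fun r s =>
      if p.2 = q.2 ∧ r = p.1 then Bmat Ψ s q.1 else 0 with hKdef
  have hΛ : lift1 (Matrix.of (Aop Ψ q η))
      = η • ((1 : Matrix (Fin N × Fin N) (Fin N × Fin N) (Matrix (Fin N) (Fin N) ℂ))
          - (q - q⁻¹) • K) := by
    ext p q : 1
    ext r s : 1
    simp only [lift1, Aop, hKdef, Matrix.of_apply, mul_ite, mul_one, mul_zero,
      Matrix.smul_apply, Matrix.sub_apply, Matrix.one_apply, smul_eq_mul,
      Matrix.zero_apply, Prod.ext_iff]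
    by_cases h1 : p.2 = q.2 <;> by_cases h2 : p.1 = q.1 <;>
      by_cases h3 : r = s <;> by_cases h4 : r = p.1 <;>
      simp [h1, h2, h3, h4, Matrix.one_apply]
  have hK : K * Rm * K = K := by
    ext p q : 1
    ext r s : 1
    simp only [hKdef, hRm, hf, Matrix.mul_apply, Matrix.sum_apply, Finset.sum_apply, Matrix.of_apply,
      Matrix.map_apply, Matrix.algebraMap_matrix_apply, Algebra.algebraMap_self_apply,
      Fintype.sum_prod_type, mul_ite, ite_mul, mul_one, one_mul, mul_zero, zero_mul,
      Matrix.zero_apply, Finset.sum_ite_eq, Finset.sum_ite_eq', Finset.mem_univ, if_true,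
      Finset.sum_ite_irrel, Finset.sum_const_zero, ite_and]
    rw [← Finset.sum_mul, hI p.2 q.2]
    split_ifs <;> simp
  rw [hΛ]
  exact re_key Rm K (q - q⁻¹) η hH' hK
end

section
/- Let R be a skew-invertible R-matrix on V⊗V with V = ℂ^N satisfying the Hecke condition with parameter q, and let η̃ ∈ ℂ∖{0}. Let (R²)_{si}^{kj} denote the matrix entries of R∘R, i.e., (R∘R)(e_s⊗e_i) = Σ_{k,j} (R²)_{si}^{kj} e_k⊗e_j. Define endomorphisms D_i^j ∈ End(V), 1 ≤ i,j ≤ N, by D_i^j(e_k) = η̃·Σ_{s=1}^N (R²)_{si}^{kj} e_s. Then the N×N matrix D with entries D_i^j satisfies the reflection equation R₁D₁R₁D₁ = D₁R₁D₁R₁ in Mat_{N²}(End(V)); i.e., the assignment L_i^j ↦ D_i^j defines a representation of the reflection equation algebra on the dual space V*. -/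
open Matrix BigOperators

/-- The endomorphism `D_i^j ∈ End(V)` given by
`D_i^j(e_k) = η̃ Σ_s (R²)_{si}^{kj} e_s`, encoded as the matrix whose `(s,k)`
entry is the coefficient of `e_s` in `D_i^j(e_k)`.  Here
`(R∘R)(e_s⊗e_i) = Σ_{k,j} (R²)_{si}^{kj} e_k⊗e_j`, i.e.
`(R²)_{si}^{kj} = (R*R) (s,i) (k,j)` with lower (input) indices first. -/
noncomputable def Dop {N : ℕ} (R : Matrix (Fin N × Fin N) (Fin N × Fin N) ℂ)
    (ηt : ℂ) (i j : Fin N) : Matrix (Fin N) (Fin N) ℂ :=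
  Matrix.of fun s k => ηt * (R * R) (s, i) (k, j)

/- ### Auxiliary lemmas -/

lemma up12_mul {N : ℕ} (X Y : Matrix (Fin N × Fin N) (Fin N × Fin N) ℂ) :
    up12 (X * Y) = up12 X * up12 Y := by
  ext ⟨s, a, b⟩ ⟨k, c, d⟩
  simp [up12, Matrix.mul_apply, Fintype.sum_prod_type, Finset.sum_mul, mul_ite, ite_mul,
    mul_assoc]

lemma up12_one {N : ℕ} : up12 (1 : Matrix (Fin N × Fin N) (Fin N × Fin N) ℂ) = 1 := by
  ext ⟨s, a, b⟩ ⟨k, c, d⟩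
  simp only [up12, Matrix.of_apply, Matrix.one_apply, Prod.ext_iff, Prod.mk.injEq]
  split_ifs <;> simp_all

lemma up12_smul {N : ℕ} (c : ℂ) (X : Matrix (Fin N × Fin N) (Fin N × Fin N) ℂ) :
    up12 (c • X) = c • up12 X := by
  ext ⟨s, a, b⟩ ⟨k, c', d⟩
  simp [up12, mul_assoc]

lemma up12_add {N : ℕ} (X Y : Matrix (Fin N × Fin N) (Fin N × Fin N) ℂ) :
    up12 (X + Y) = up12 X + up12 Y := by
  ext ⟨s, a, b⟩ ⟨k, c, d⟩
  simp only [up12, Matrix.of_apply, Matrix.add_apply, add_mul]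

/-- The embedding of `Mat_{N²}(Mat_N(ℂ))` into `Mat_{N³}(ℂ)`, putting the
"inner" (operator) space as the first tensor factor. -/
noncomputable def Phi {N : ℕ}
    (M : Matrix (Fin N × Fin N) (Fin N × Fin N) (Matrix (Fin N) (Fin N) ℂ)) :
    Matrix (Fin N × Fin N × Fin N) (Fin N × Fin N × Fin N) ℂ :=
  Matrix.of fun p q => (M (p.2.1, p.2.2) (q.2.1, q.2.2)) p.1 q.1

lemma Phi_mul {N : ℕ} (M M' : Matrix (Fin N × Fin N) (Fin N × Fin N) (Matrix (Fin N) (Fin N) ℂ)) :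
    Phi (M * M') = Phi M * Phi M' := by
  ext ⟨s, a, b⟩ ⟨k, c, d⟩
  simp only [Phi, Matrix.of_apply, Matrix.mul_apply, Matrix.sum_apply, Fintype.sum_prod_type]
  calc (∑ x : Fin N, ∑ y : Fin N, ∑ t : Fin N, M (a,b) (x,y) s t * M' (x,y) (c,d) t k)
      = ∑ x : Fin N, ∑ t : Fin N, ∑ y : Fin N, M (a,b) (x,y) s t * M' (x,y) (c,d) t k :=
        Finset.sum_congr rfl fun x _ => Finset.sum_comm
    _ = ∑ t : Fin N, ∑ x : Fin N, ∑ y : Fin N, M (a,b) (x,y) s t * M' (x,y) (c,d) t k :=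
        Finset.sum_comm

lemma Phi_inj {N : ℕ} : Function.Injective (Phi (N := N)) := by
  intro M M' h
  ext ⟨a, b⟩ ⟨c, d⟩ s k
  exact congrFun (congrFun h (s, a, b)) (k, c, d)

lemma Phi_R {N : ℕ} (R : Matrix (Fin N × Fin N) (Fin N × Fin N) ℂ) :
    Phi (R.map (algebraMap ℂ (Matrix (Fin N) (Fin N) ℂ))) = up23 R := by
  ext ⟨s, a, b⟩ ⟨k, c, d⟩
  simp only [Phi, up23, Matrix.of_apply, Matrix.map_apply, Matrix.algebraMap_matrix_apply]
  split_ifs <;> simp [mul_comm]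

lemma Phi_D {N : ℕ} (R : Matrix (Fin N × Fin N) (Fin N × Fin N) ℂ) (ηt : ℂ) :
    Phi (lift1 (Matrix.of (Dop R ηt))) = ηt • up12 (R * R) := by
  ext ⟨s, a, b⟩ ⟨k, c, d⟩
  simp only [Phi, lift1, Dop, up12, Matrix.of_apply, Matrix.smul_apply, mul_ite, mul_one,
    mul_zero, smul_eq_mul]
  split_ifs <;> simp [mul_comm]

/-- Abstract reflection identity from the Hecke condition and Yang–Baxter. -/
lemma key_reflection {A : Type} [Ring A] [Algebra ℂ A] (a b : A) (γ : ℂ)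
    (ha : a * a = γ • a + 1) (hb : b * b = γ • b + 1)
    (hy : a * b * a = b * a * b) :
    b * (a * a) * b * (a * a) = (a * a) * b * (a * a) * b := by
  have h1 : b * a * b * a = γ • (a * b * a) + a * b := by
    calc b * a * b * a = a * b * a * a := by rw [← hy]
    _ = a * b * (a * a) := by noncomm_ring
    _ = a * b * (γ • a + 1) := by rw [ha]
    _ = γ • (a * b * a) + a * b := by noncomm_ring
  have h2 : a * b * a * b = γ • (a * b * a) + b * a := by
    calc a * b * a * b = b * a * b * b := by rw [hy]
    _ = b * a * (b * b) := by noncomm_ring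
    _ = b * a * (γ • b + 1) := by rw [hb]
    _ = γ • (b * a * b) + b * a := by noncomm_ring
    _ = γ • (a * b * a) + b * a := by rw [hy]
  have h3 : a * b * b = γ • (a * b) + a := by
    calc a * b * b = a * (b * b) := by noncomm_ring
    _ = a * (γ • b + 1) := by rw [hb]
    _ = γ • (a * b) + a := by noncomm_ring
  have h4 : b * b * a = γ • (b * a) + a := by
    calc b * b * a = (γ • b + 1) * a := by rw [hb]
    _ = γ • (b * a) + a := by noncomm_ring
  have hy' : b * a * b = a * b * a := hy.symm
  have L : b * (a * a) * b * (a * a)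
      = γ • γ • γ • (a*b*a) + γ • γ • (a*b) + γ • γ • (b*a) + γ • (a*b*a) + γ • a + γ • b + 1 := by
    rw [ha]
    calc b * (γ • a + 1) * b * (γ • a + 1)
        = γ • γ • (b*a*b*a) + γ • (b*a*b) + (γ • (b*b*a) + b*b) := by
          simp only [mul_add, add_mul, one_mul, mul_one, smul_mul_assoc, mul_smul_comm, mul_assoc]
          module
    _ = γ • γ • (γ • (a*b*a) + a*b) + γ • (a*b*a) + (γ • (γ • (b*a) + a) + (γ • b + 1)) := by
          rw [h1, hy', h4, hb]
    _ = _ := by module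
  have Rr : (a * a) * b * (a * a) * b
      = γ • γ • γ • (a*b*a) + γ • γ • (a*b) + γ • γ • (b*a) + γ • (a*b*a) + γ • a + γ • b + 1 := by
    rw [ha]
    calc (γ • a + 1) * b * (γ • a + 1) * b
        = γ • γ • (a*b*a*b) + γ • (a*b*b) + (γ • (b*a*b) + b*b) := by
          simp only [mul_add, add_mul, one_mul, mul_one, smul_mul_assoc, mul_smul_comm, mul_assoc]
          module
    _ = γ • γ • (γ • (a*b*a) + b*a) + γ • (γ • (a*b) + a) + (γ • (a*b*a) + (γ • b + 1)) := by
          rw [h2, h3, hy', hb]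
    _ = _ := by module
  rw [L, Rr]

/-- The matrix `D` with entries `D_i^j` in the noncommutative algebra
`End(V) = Mat_N(ℂ)` satisfies the reflection equation `R₁D₁R₁D₁ = D₁R₁D₁R₁`,
i.e. the assignment `L_i^j ↦ D_i^j` is a representation of the reflection
equation algebra on the dual space `V*`. -/
theorem reflection_rep_on_dual (N : ℕ) (hN : 1 ≤ N)
    (R Rinv Ψ : Matrix (Fin N × Fin N) (Fin N × Fin N) ℂ) (q ηt : ℂ)
    (hq : q ≠ 0) (hηt : ηt ≠ 0)
    (hYB : up12 R * up23 R * up12 R = up23 R * up12 R * up23 R)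
    (hRinv : R * Rinv = 1 ∧ Rinv * R = 1)
    (hHecke : (R - q • (1 : Matrix (Fin N × Fin N) (Fin N × Fin N) ℂ))
        * (R + q⁻¹ • (1 : Matrix (Fin N × Fin N) (Fin N × Fin N) ℂ)) = 0)
    (hskew : ptrMid (up12 R * up23 Ψ) = flip13 N ∧ ptrMid (up12 Ψ * up23 R) = flip13 N) :
    R.map (algebraMap ℂ (Matrix (Fin N) (Fin N) ℂ)) * lift1 (Matrix.of (Dop R ηt))
        * R.map (algebraMap ℂ (Matrix (Fin N) (Fin N) ℂ)) * lift1 (Matrix.of (Dop R ηt))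
      = lift1 (Matrix.of (Dop R ηt)) * R.map (algebraMap ℂ (Matrix (Fin N) (Fin N) ℂ))
        * lift1 (Matrix.of (Dop R ηt)) * R.map (algebraMap ℂ (Matrix (Fin N) (Fin N) ℂ)) := by
  -- the Hecke condition gives `R² = (q - q⁻¹) • R + 1`
  have hqq : q * q⁻¹ = 1 := mul_inv_cancel₀ hq
  have hR2 : R * R = (q - q⁻¹) • R + 1 := by
    have expand : R * R = (R - q • (1 : Matrix (Fin N × Fin N) (Fin N × Fin N) ℂ))
        * (R + q⁻¹ • (1 : Matrix (Fin N × Fin N) (Fin N × Fin N) ℂ))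
        + (q - q⁻¹) • R + (q * q⁻¹) • (1 : Matrix (Fin N × Fin N) (Fin N × Fin N) ℂ) := by
      simp only [mul_add, add_mul, sub_mul, mul_sub, smul_mul_assoc, mul_smul_comm, one_mul,
        mul_one, smul_smul]
      module
    rw [expand, hHecke, hqq]
    module
  -- transfer everything to `Mat_{N³}(ℂ)` via the injective multiplicative map `Phi`
  set γ : ℂ := q - q⁻¹ with hγ
  have ha : up12 R * up12 R = γ • up12 R + 1 := by
    rw [← up12_mul, hR2, up12_add, up12_smul, up12_one]
  have hup23mul : ∀ X Y : Matrix (Fin N × Fin N) (Fin N × Fin N) ℂ,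
      up23 (X * Y) = up23 X * up23 Y := by
    intro X Y
    ext ⟨s, a, b⟩ ⟨k, c, d⟩
    simp [up23, Matrix.mul_apply, Fintype.sum_prod_type, Finset.sum_mul, mul_ite, ite_mul,
      mul_assoc]
  have hup23one : up23 (1 : Matrix (Fin N × Fin N) (Fin N × Fin N) ℂ) = 1 := by
    ext ⟨s, a, b⟩ ⟨k, c, d⟩
    simp only [up23, Matrix.of_apply, Matrix.one_apply, Prod.ext_iff, Prod.mk.injEq]
    split_ifs <;> simp_all
  have hup23smul : ∀ (c : ℂ) (X : Matrix (Fin N × Fin N) (Fin N × Fin N) ℂ),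
      up23 (c • X) = c • up23 X := by
    intro c X
    ext ⟨s, a, b⟩ ⟨k, c', d⟩
    simp [up23, mul_ite, mul_assoc, mul_left_comm]
  have hup23add : ∀ X Y : Matrix (Fin N × Fin N) (Fin N × Fin N) ℂ,
      up23 (X + Y) = up23 X + up23 Y := by
    intro X Y
    ext ⟨s, a, b⟩ ⟨k, c, d⟩
    simp [up23, mul_add]
  have hb : up23 R * up23 R = γ • up23 R + 1 := by
    rw [← hup23mul, hR2, hup23add, hup23smul, hup23one]
  have main := key_reflection (up12 R) (up23 R) γ ha hb hYB
  apply Phi_inj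
  simp only [Phi_mul, Phi_R, Phi_D, up12_mul]
  simp only [smul_mul_assoc, mul_smul_comm]
  rw [main]
end

section
/- Let R be an R-matrix on V⊗V, V = ℂ^N, satisfying the Hecke condition with parameter q, with q² ≠ 1, let A be an associative unital ℂ-algebra, and let K be an N×N matrix with entries in A. Set L := I_N·1_A − (q−q⁻¹)·K. Then L satisfies the reflection equation R₁L₁R₁L₁ = L₁R₁L₁R₁ in Mat_{N²}(A) if and only if K satisfies the modified reflection equation R₁K₁R₁K₁ − K₁R₁K₁R₁ = R₁K₁ − K₁R₁ in Mat_{N²}(A). -/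
open Matrix BigOperators

lemma key_hecke_identity {B : Type*} [Ring B] [Algebra ℂ B] (S M : B) (c : ℂ)
    (hSS : S * S = c • S + 1) :
    S * (1 - c • M) * S * (1 - c • M) - (1 - c • M) * S * (1 - c • M) * S
      = (c ^ 2) • (S * M * S * M - M * S * M * S - (S * M - M * S)) := by
  have h1 : ∀ x : B, S * (S * x) = c • (S * x) + x := fun x => by
    rw [← mul_assoc, hSS, add_mul, smul_mul_assoc, one_mul]
  simp only [mul_sub, sub_mul, mul_one, one_mul, mul_smul_comm, smul_mul_assoc,
    mul_assoc, hSS, h1, smul_add, smul_smul, smul_sub, add_mul, mul_add]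
  module

/-- For a Hecke-type R-matrix with `q² ≠ 1`, the matrix
`L = I − (q−q⁻¹)K` satisfies the reflection equation
`R₁L₁R₁L₁ = L₁R₁L₁R₁` iff `K` satisfies the modified reflection equation
`R₁K₁R₁K₁ − K₁R₁K₁R₁ = R₁K₁ − K₁R₁`. -/
theorem reflection_iff_modified_reflection (N : ℕ) (hN : 1 ≤ N)
    (R Rinv : Matrix (Fin N × Fin N) (Fin N × Fin N) ℂ) (q : ℂ)
    (hq : q ≠ 0) (hq2 : q ^ 2 ≠ 1)
    (hYB : up12 R * up23 R * up12 R = up23 R * up12 R * up23 R)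
    (hRinv : R * Rinv = 1 ∧ Rinv * R = 1)
    (hHecke : (R - q • (1 : Matrix (Fin N × Fin N) (Fin N × Fin N) ℂ))
        * (R + q⁻¹ • (1 : Matrix (Fin N × Fin N) (Fin N × Fin N) ℂ)) = 0)
    (A : Type) [Ring A] [Algebra ℂ A] (K L : Matrix (Fin N) (Fin N) A)
    (hL : L = (1 : Matrix (Fin N) (Fin N) A) - algebraMap ℂ A (q - q⁻¹) • K) :
    (R.map (algebraMap ℂ A) * lift1 L * R.map (algebraMap ℂ A) * lift1 L
        = lift1 L * R.map (algebraMap ℂ A) * lift1 L * R.map (algebraMap ℂ A))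
      ↔ (R.map (algebraMap ℂ A) * lift1 K * R.map (algebraMap ℂ A) * lift1 K
          - lift1 K * R.map (algebraMap ℂ A) * lift1 K * R.map (algebraMap ℂ A)
        = R.map (algebraMap ℂ A) * lift1 K - lift1 K * R.map (algebraMap ℂ A)) := by
  set c : ℂ := q - q⁻¹ with hc_def
  have hc : c ≠ 0 := by
    intro h
    apply hq2
    have h' : q = q⁻¹ := sub_eq_zero.mp h
    calc q ^ 2 = q * q := sq q
    _ = q * q⁻¹ := by nth_rewrite 2 [h']; rfl
    _ = 1 := mul_inv_cancel₀ hq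
  -- Hecke relation over ℂ
  have hR2 : R * R = c • R + 1 := by
    have h := hHecke
    rw [sub_mul, mul_add, mul_add] at h
    simp only [mul_smul_comm, smul_mul_assoc, mul_one, one_mul, smul_smul] at h
    rw [inv_mul_cancel₀ hq, one_smul, sub_eq_zero] at h
    rw [hc_def, sub_smul]
    linear_combination (norm := module) h
  set S := R.map (algebraMap ℂ A) with hS_def
  set M := lift1 K with hM_def
  -- Hecke relation over A
  have hS2 : S * S = c • S + 1 := by
    have hmul : S * S = (R * R).map (algebraMap ℂ A) := (Matrix.map_mul).symm
    rw [hmul, hR2]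
    ext p r
    simp only [Matrix.map_apply, Matrix.add_apply, Matrix.smul_apply, Matrix.one_apply,
      smul_eq_mul]
    simp [_root_.map_add, _root_.map_mul, apply_ite (algebraMap ℂ A), Algebra.smul_def, hS_def, Matrix.map_apply]
  -- lifting L
  have hLlift : lift1 L = 1 - c • M := by
    rw [hL]
    ext p r
    simp only [lift1, Matrix.of_apply, Matrix.sub_apply, Matrix.smul_apply,
      Matrix.one_apply, Prod.ext_iff]
    by_cases h : p.2 = r.2 <;>
      simp [h, sub_mul, Algebra.smul_def, hM_def, lift1]
  have main := key_hecke_identity S M c hS2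
  have hsmul : ∀ X : Matrix (Fin N × Fin N) (Fin N × Fin N) A,
      (c ^ 2) • X = 0 ↔ X = 0 := by
    intro X
    constructor
    · intro h
      have h2 := congrArg (fun Y => (c ^ 2)⁻¹ • Y) h
      simpa [smul_smul, inv_mul_cancel₀ (pow_ne_zero 2 hc)] using h2
    · intro h; rw [h, smul_zero]
  rw [hLlift]
  constructor
  · intro h
    rw [← sub_eq_zero]
    have h0 : (c ^ 2) • (S * M * S * M - M * S * M * S - (S * M - M * S)) = 0 := by
      rw [← main, h, sub_self]
    exact (hsmul _).mp h0
  · intro h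
    rw [← sub_eq_zero, main, hsmul, sub_eq_zero]
    exact h
end

section
/- Let R be an R-matrix on V⊗V, V = ℂ^N, let A be an associative unital ℂ-algebra, and let L ∈ Mat_N(A) satisfy the reflection equation R₁L₁R₁L₁ = L₁R₁L₁R₁. For k ≥ 1 define in Mat_{N^k}(A): L_{1̄} := L₁ and L_{i+1‾} := R_i L_{ī} R_i⁻¹; and L_{1̲} := L₁ and L_{i+1̲} := R_i⁻¹ L_{i̲} R_i. Then for every k ≥ 1 the two ordered products coincide: L_{1̄} L_{2̄} ⋯ L_{k̄} = L_{k̲} L_{k−1̲} ⋯ L_{1̲} in Mat_{N^k}(A). -/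
open Matrix BigOperators

/-- A matrix `X ∈ Mat_N(A)` placed in the (0-indexed) tensor factor `p`
of `V^{⊗k}`, acting as the identity elsewhere. -/
def liftV {N : ℕ} {A : Type} [Ring A] (k : ℕ) (X : Matrix (Fin N) (Fin N) A)
    (p : ℕ) : Matrix (Fin k → Fin N) (Fin k → Fin N) A :=
  Matrix.of fun v w =>
    if h : p < k then
      X (v ⟨p, h⟩) (w ⟨p, h⟩) *
        (if ∀ j : Fin k, (j : ℕ) ≠ p → v j = w j then 1 else 0)
    else (if v = w then 1 else 0)

/-- A matrix `X ∈ Mat_{N²}(A)` placed in the (0-indexed) tensor factors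
`p, p+1` of `V^{⊗k}`, acting as the identity elsewhere; this is the
operator `X_{p+1}` in 1-indexed notation. -/
def lift2 {N : ℕ} {A : Type} [Ring A] (k : ℕ)
    (X : Matrix (Fin N × Fin N) (Fin N × Fin N) A) (p : ℕ) :
    Matrix (Fin k → Fin N) (Fin k → Fin N) A :=
  Matrix.of fun v w =>
    if h : p + 1 < k then
      X (v ⟨p, Nat.lt_of_succ_lt h⟩, v ⟨p + 1, h⟩)
          (w ⟨p, Nat.lt_of_succ_lt h⟩, w ⟨p + 1, h⟩) *
        (if ∀ j : Fin k, (j : ℕ) ≠ p → (j : ℕ) ≠ p + 1 → v j = w j then 1 else 0)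
    else (if v = w then 1 else 0)

/-- The "overlined" copies of `L` in `Mat_{N^k}(A)`:
`L_{1̄} = L₁` and `L_{n+2‾} = R_{n+1} L_{n+1‾} R_{n+1}⁻¹` (0-indexed here:
`Lbar k RA RinvA L n` is the copy `L_{n+1‾}`). -/
def Lbar {N : ℕ} {A : Type} [Ring A] (k : ℕ)
    (RA RinvA : Matrix (Fin N × Fin N) (Fin N × Fin N) A)
    (L : Matrix (Fin N) (Fin N) A) :
    ℕ → Matrix (Fin k → Fin N) (Fin k → Fin N) A
  | 0 => liftV k L 0
  | n + 1 => lift2 k RA n * Lbar k RA RinvA L n * lift2 k RinvA n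

/-- The "underlined" copies of `L`:
`L_{1̲} = L₁` and `L_{n+2̲} = R_{n+1}⁻¹ L_{n+1̲} R_{n+1}`. -/
def Lund {N : ℕ} {A : Type} [Ring A] (k : ℕ)
    (RA RinvA : Matrix (Fin N × Fin N) (Fin N × Fin N) A)
    (L : Matrix (Fin N) (Fin N) A) :
    ℕ → Matrix (Fin k → Fin N) (Fin k → Fin N) A
  | 0 => liftV k L 0
  | n + 1 => lift2 k RinvA n * Lund k RA RinvA L n * lift2 k RA n

/-- The ordered product `L_{1̄} L_{2̄} ⋯ L_{n+1‾}`. -/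
def LbarProd {N : ℕ} {A : Type} [Ring A] (k : ℕ)
    (RA RinvA : Matrix (Fin N × Fin N) (Fin N × Fin N) A)
    (L : Matrix (Fin N) (Fin N) A) :
    ℕ → Matrix (Fin k → Fin N) (Fin k → Fin N) A
  | 0 => Lbar k RA RinvA L 0
  | n + 1 => LbarProd k RA RinvA L n * Lbar k RA RinvA L (n + 1)

/-- The ordered product `L_{n+1̲} L_{n̲} ⋯ L_{1̲}`. -/
def LundProd {N : ℕ} {A : Type} [Ring A] (k : ℕ)
    (RA RinvA : Matrix (Fin N × Fin N) (Fin N × Fin N) A)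
    (L : Matrix (Fin N) (Fin N) A) :
    ℕ → Matrix (Fin k → Fin N) (Fin k → Fin N) A
  | 0 => Lund k RA RinvA L 0
  | n + 1 => Lund k RA RinvA L (n + 1) * LundProd k RA RinvA L n

section helpers
variable {N k : ℕ} {A : Type} [AddCommMonoid A]




lemma sum_one_pos {p : ℕ} (hp : p < k)
    (v : Fin k → Fin N) (F : (Fin k → Fin N) → A)
    (hF : ∀ u, ¬(∀ j : Fin k, (j : ℕ) ≠ p → v j = u j) → F u = 0) :
    ∑ u, F u = ∑ a : Fin N, F (fun j => if (j : ℕ) = p then a else v j) := by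
  classical
  set i : Fin N → (Fin k → Fin N) := fun a j => if (j : ℕ) = p then a else v j with hi
  have hinj : Function.Injective i := by
    intro a b h
    have h1 := congrFun h ⟨p, hp⟩
    simpa [i] using h1
  have himg : ∀ u : Fin k → Fin N, u ∈ Finset.univ → u ∉ Finset.univ.image i → F u = 0 := by
    intro u _ hu
    apply hF
    intro hc
    apply hu
    refine Finset.mem_image.2 ⟨u ⟨p, hp⟩, Finset.mem_univ _, ?_⟩
    funext j
    simp only [i]
    split_ifs with h1
    · congr 1
      exact Fin.ext h1.symm
    · exact hc j h1
  rw [← Finset.sum_subset (Finset.subset_univ (Finset.univ.image i)) himg,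
      Finset.sum_image (fun a _ b _ h => hinj h)]



lemma sum_two_pos {p : ℕ} (hp1 : p + 1 < k)
    (v : Fin k → Fin N) (F : (Fin k → Fin N) → A)
    (hF : ∀ u, ¬(∀ j : Fin k, (j : ℕ) ≠ p → (j : ℕ) ≠ p + 1 → v j = u j) → F u = 0) :
    ∑ u, F u = ∑ ab : Fin N × Fin N,
      F (fun j => if (j : ℕ) = p then ab.1 else if (j : ℕ) = p + 1 then ab.2 else v j) := by
  classical
  have hp : p < k := Nat.lt_of_succ_lt hp1
  set i : Fin N × Fin N → (Fin k → Fin N) :=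
    fun ab j => if (j : ℕ) = p then ab.1 else if (j : ℕ) = p + 1 then ab.2 else v j with hi
  have hinj : Function.Injective i := by
    intro a b h
    have h1 := congrFun h ⟨p, hp⟩
    have h2 := congrFun h ⟨p + 1, hp1⟩
    simp only [i] at h1 h2
    simp only [if_true] at h1 h2
    simp only [if_neg (show ¬(p + 1 = p) by omega)] at h2
    exact Prod.ext h1 h2
  have himg : ∀ u : Fin k → Fin N, u ∈ Finset.univ → u ∉ Finset.univ.image i → F u = 0 := by
    intro u _ hu
    apply hF
    intro hc
    apply hu
    refine Finset.mem_image.2 ⟨(u ⟨p, hp⟩, u ⟨p + 1, hp1⟩), Finset.mem_univ _, ?_⟩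
    funext j
    simp only [i]
    split_ifs with h1 h2
    · congr 1; exact Fin.ext h1.symm
    · congr 1; exact Fin.ext h2.symm
    · exact hc j h1 h2
  rw [← Finset.sum_subset (Finset.subset_univ (Finset.univ.image i)) himg,
      Finset.sum_image (fun a _ b _ h => hinj h)]

lemma sum_three_pos {p : ℕ} (hp2 : p + 2 < k)
    (v : Fin k → Fin N) (F : (Fin k → Fin N) → A)
    (hF : ∀ u, ¬(∀ j : Fin k, (j : ℕ) ≠ p → (j : ℕ) ≠ p + 1 → (j : ℕ) ≠ p + 2 → v j = u j) →
      F u = 0) :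
    ∑ u, F u = ∑ ab : Fin N × Fin N × Fin N,
      F (fun j => if (j : ℕ) = p then ab.1 else if (j : ℕ) = p + 1 then ab.2.1
          else if (j : ℕ) = p + 2 then ab.2.2 else v j) := by
  classical
  have hp : p < k := by omega
  have hp1 : p + 1 < k := by omega
  set i : Fin N × Fin N × Fin N → (Fin k → Fin N) :=
    fun ab j => if (j : ℕ) = p then ab.1 else if (j : ℕ) = p + 1 then ab.2.1
      else if (j : ℕ) = p + 2 then ab.2.2 else v j with hi
  have hinj : Function.Injective i := by
    intro a b h
    have h1 := congrFun h ⟨p, hp⟩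
    have h2 := congrFun h ⟨p + 1, hp1⟩
    have h3 := congrFun h ⟨p + 2, hp2⟩
    simp only [i] at h1 h2 h3
    simp only [if_true] at h1 h2 h3
    simp only [if_neg (show ¬(p + 1 = p) by omega)] at h2
    simp only [if_neg (show ¬(p + 2 = p) by omega), if_neg (show ¬(p + 2 = p + 1) by omega)] at h3
    exact Prod.ext h1 (Prod.ext h2 h3)
  have himg : ∀ u : Fin k → Fin N, u ∈ Finset.univ → u ∉ Finset.univ.image i → F u = 0 := by
    intro u _ hu
    apply hF
    intro hc
    apply hu
    refine Finset.mem_image.2 ⟨(u ⟨p, hp⟩, u ⟨p + 1, hp1⟩, u ⟨p + 2, hp2⟩), Finset.mem_univ _, ?_⟩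
    funext j
    simp only [i]
    split_ifs with h1 h2 h3
    · congr 1; exact Fin.ext h1.symm
    · congr 1; exact Fin.ext h2.symm
    · congr 1; exact Fin.ext h3.symm
    · exact hc j h1 h2 h3
  rw [← Finset.sum_subset (Finset.subset_univ (Finset.univ.image i)) himg,
      Finset.sum_image (fun a _ b _ h => hinj h)]

end helpers
section lift2
variable {N k : ℕ} {A : Type} [Ring A]

lemma lift2_triv (X : Matrix (Fin N × Fin N) (Fin N × Fin N) A) {p : ℕ} (h : ¬ p + 1 < k) :
    lift2 k X p = 1 := by
  ext v w
  simp [lift2, dif_neg h, Matrix.one_apply]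

lemma lift2_one (p : ℕ) : lift2 k (1 : Matrix (Fin N × Fin N) (Fin N × Fin N) A) p = 1 := by
  by_cases h : p + 1 < k
  · ext v w
    have hp : p < k := Nat.lt_of_succ_lt h
    simp only [lift2, Matrix.of_apply, dif_pos h, Matrix.one_apply]
    by_cases hvw : v = w
    · subst hvw
      simp
    · rw [if_neg hvw]
      by_cases h1 : v ⟨p, hp⟩ = w ⟨p, hp⟩ <;> by_cases h2 : v ⟨p+1, h⟩ = w ⟨p+1, h⟩ <;>
        by_cases h3 : (∀ j : Fin k, (j : ℕ) ≠ p → (j : ℕ) ≠ p + 1 → v j = w j)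
      all_goals simp_all [Prod.ext_iff]
      · -- v = w contradiction case
        exact (hvw (show v = w from funext fun j => by
          by_cases hj : (j : ℕ) = p
          · have : j = ⟨p, hp⟩ := Fin.ext hj
            rw [this]; exact h1
          · by_cases hj2 : (j : ℕ) = p + 1
            · have : j = ⟨p+1, h⟩ := Fin.ext hj2
              rw [this]; exact h2
            · exact h3 j hj hj2)).elim
  · rw [lift2_triv _ h]

end lift2
section lift2mul
variable {N k : ℕ} {A : Type} [Ring A]

lemma lift2_mul (X Y : Matrix (Fin N × Fin N) (Fin N × Fin N) A) (p : ℕ) :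
    lift2 k (X * Y) p = lift2 k X p * lift2 k Y p := by
  by_cases h : p + 1 < k
  · have hp : p < k := Nat.lt_of_succ_lt h
    ext v w
    rw [Matrix.mul_apply]
    simp only [lift2, Matrix.of_apply, dif_pos h]
    rw [sum_two_pos h v
      (fun u => (X (v ⟨p, hp⟩, v ⟨p+1, h⟩) (u ⟨p, hp⟩, u ⟨p+1, h⟩) *
          (if ∀ j : Fin k, (j : ℕ) ≠ p → (j : ℕ) ≠ p + 1 → v j = u j then 1 else 0)) *
        (Y (u ⟨p, hp⟩, u ⟨p+1, h⟩) (w ⟨p, hp⟩, w ⟨p+1, h⟩) *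
          (if ∀ j : Fin k, (j : ℕ) ≠ p → (j : ℕ) ≠ p + 1 → u j = w j then 1 else 0)))
      (fun u hu => by simp only [if_neg hu, mul_zero, zero_mul])]
    rw [Matrix.mul_apply, Finset.sum_mul]
    refine Finset.sum_congr rfl fun ab _ => ?_
    have c1 : (∀ j : Fin k, (j : ℕ) ≠ p → (j : ℕ) ≠ p + 1 →
        v j = if (j : ℕ) = p then ab.1 else if (j : ℕ) = p + 1 then ab.2 else v j) := by
      intro j h1 h2
      simp [h1, h2]
    have c2 : (∀ j : Fin k, (j : ℕ) ≠ p → (j : ℕ) ≠ p + 1 →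
        (if (j : ℕ) = p then ab.1 else if (j : ℕ) = p + 1 then ab.2 else v j) = w j)
        ↔ (∀ j : Fin k, (j : ℕ) ≠ p → (j : ℕ) ≠ p + 1 → v j = w j) := by
      constructor
      · intro hq j h1 h2
        have := hq j h1 h2
        simpa [h1, h2] using this
      · intro hq j h1 h2
        simpa [h1, h2] using hq j h1 h2
    simp only [if_true, if_neg (show ¬(p + 1 = p) by omega), if_pos c1,
      if_congr c2 rfl rfl, mul_one, Prod.mk.eta, mul_assoc]
  · rw [lift2_triv _ h, lift2_triv _ h, lift2_triv _ h, one_mul]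

end lift2mul
section closedforms
variable {N k : ℕ} {A : Type} [Ring A]

lemma lift2_mul_lift2_apply (X Y : Matrix (Fin N × Fin N) (Fin N × Fin N) A)
    {p q : ℕ} (hp : p + 1 < k) (hq : q + 1 < k)
    (d1 : p ≠ q) (d2 : p ≠ q + 1) (d3 : p + 1 ≠ q) (v w : Fin k → Fin N) :
    (lift2 k X p * lift2 k Y q) v w
      = X (v ⟨p, Nat.lt_of_succ_lt hp⟩, v ⟨p+1, hp⟩) (w ⟨p, Nat.lt_of_succ_lt hp⟩, w ⟨p+1, hp⟩) *
        (Y (v ⟨q, Nat.lt_of_succ_lt hq⟩, v ⟨q+1, hq⟩) (w ⟨q, Nat.lt_of_succ_lt hq⟩, w ⟨q+1, hq⟩) *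
          (if ∀ j : Fin k, (j : ℕ) ≠ p → (j : ℕ) ≠ p + 1 → (j : ℕ) ≠ q → (j : ℕ) ≠ q + 1 →
              v j = w j then 1 else 0)) := by
  have hp' : p < k := Nat.lt_of_succ_lt hp
  have hq' : q < k := Nat.lt_of_succ_lt hq
  rw [Matrix.mul_apply]
  simp only [lift2, Matrix.of_apply, dif_pos hp, dif_pos hq]
  rw [sum_two_pos hp v
    (fun u => (X (v ⟨p, hp'⟩, v ⟨p+1, hp⟩) (u ⟨p, hp'⟩, u ⟨p+1, hp⟩) *
        (if ∀ j : Fin k, (j : ℕ) ≠ p → (j : ℕ) ≠ p + 1 → v j = u j then 1 else 0)) *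
      (Y (u ⟨q, hq'⟩, u ⟨q+1, hq⟩) (w ⟨q, hq'⟩, w ⟨q+1, hq⟩) *
        (if ∀ j : Fin k, (j : ℕ) ≠ q → (j : ℕ) ≠ q + 1 → u j = w j then 1 else 0)))
    (fun u hu => by simp only [if_neg hu, mul_zero, zero_mul])]
  have c1 : ∀ ab : Fin N × Fin N, (∀ j : Fin k, (j : ℕ) ≠ p → (j : ℕ) ≠ p + 1 →
      v j = if (j : ℕ) = p then ab.1 else if (j : ℕ) = p + 1 then ab.2 else v j) := by
    intro ab j h1 h2
    simp [h1, h2]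
  have c2 : ∀ ab : Fin N × Fin N,
      (∀ j : Fin k, (j : ℕ) ≠ q → (j : ℕ) ≠ q + 1 →
        (if (j : ℕ) = p then ab.1 else if (j : ℕ) = p + 1 then ab.2 else v j) = w j)
      ↔ (ab = (w ⟨p, hp'⟩, w ⟨p+1, hp⟩) ∧
          (∀ j : Fin k, (j : ℕ) ≠ p → (j : ℕ) ≠ p + 1 → (j : ℕ) ≠ q → (j : ℕ) ≠ q + 1 →
            v j = w j)) := by
    intro ab
    constructor
    · intro hc
      have e1 := hc ⟨p, hp'⟩ (by simpa using d1) (by simpa using d2)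
      have e2 := hc ⟨p+1, hp⟩ (by simpa using d3) (by simp; omega)
      simp at e1 e2
      refine ⟨Prod.ext e1 e2, fun j h1 h2 h3 h4 => ?_⟩
      have := hc j h3 h4
      simpa [h1, h2] using this
    · rintro ⟨rfl, hd⟩
      intro j h3 h4
      by_cases h1 : (j : ℕ) = p
      · simp only [if_pos h1]
        have hj : j = ⟨p, hp'⟩ := Fin.ext h1
        rw [hj]
      · by_cases h2 : (j : ℕ) = p + 1
        · simp only [if_neg h1, if_pos h2]
          have hj : j = ⟨p+1, hp⟩ := Fin.ext h2
          rw [hj]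
        · simp only [if_neg h1, if_neg h2]
          exact hd j h1 h2 h3 h4
  rw [Finset.sum_eq_single (w ⟨p, hp'⟩, w ⟨p+1, hp⟩)
    (fun ab _ hne => by
      simp only [if_neg (fun hC => hne (((c2 ab).1 hC).1)), mul_zero])
    (fun habs => absurd (Finset.mem_univ _) habs)]
  simp only [if_pos (c1 (w ⟨p, hp'⟩, w ⟨p+1, hp⟩)), mul_one,
    if_congr ((c2 (w ⟨p, hp'⟩, w ⟨p+1, hp⟩)).trans (and_iff_right rfl)) rfl rfl]
  simp [Fin.ext_iff, show ¬(q = p) by omega, show ¬(q = p+1) by omega,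
    show ¬(q+1 = p) by omega, show ¬(q+1 = p+1) by omega, show ¬(p+1 = p) by omega]

end closedforms
section closedforms2
variable {N k : ℕ} {A : Type} [Ring A]

lemma lift2_mul_liftV_apply (X : Matrix (Fin N × Fin N) (Fin N × Fin N) A)
    (L : Matrix (Fin N) (Fin N) A) {p m : ℕ} (hp : p + 1 < k) (hm : m < k)
    (d1 : m ≠ p) (d2 : m ≠ p + 1) (v w : Fin k → Fin N) :
    (lift2 k X p * liftV k L m) v w
      = X (v ⟨p, Nat.lt_of_succ_lt hp⟩, v ⟨p+1, hp⟩) (w ⟨p, Nat.lt_of_succ_lt hp⟩, w ⟨p+1, hp⟩) *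
        (L (v ⟨m, hm⟩) (w ⟨m, hm⟩) *
          (if ∀ j : Fin k, (j : ℕ) ≠ p → (j : ℕ) ≠ p + 1 → (j : ℕ) ≠ m →
              v j = w j then 1 else 0)) := by
  have hp' : p < k := Nat.lt_of_succ_lt hp
  rw [Matrix.mul_apply]
  simp only [lift2, liftV, Matrix.of_apply, dif_pos hp, dif_pos hm]
  rw [sum_two_pos hp v
    (fun u => (X (v ⟨p, hp'⟩, v ⟨p+1, hp⟩) (u ⟨p, hp'⟩, u ⟨p+1, hp⟩) *
        (if ∀ j : Fin k, (j : ℕ) ≠ p → (j : ℕ) ≠ p + 1 → v j = u j then 1 else 0)) *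
      (L (u ⟨m, hm⟩) (w ⟨m, hm⟩) *
        (if ∀ j : Fin k, (j : ℕ) ≠ m → u j = w j then 1 else 0)))
    (fun u hu => by simp only [if_neg hu, mul_zero, zero_mul])]
  have c1 : ∀ ab : Fin N × Fin N, (∀ j : Fin k, (j : ℕ) ≠ p → (j : ℕ) ≠ p + 1 →
      v j = if (j : ℕ) = p then ab.1 else if (j : ℕ) = p + 1 then ab.2 else v j) := by
    intro ab j h1 h2
    simp [h1, h2]
  have c2 : ∀ ab : Fin N × Fin N,
      (∀ j : Fin k, (j : ℕ) ≠ m →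
        (if (j : ℕ) = p then ab.1 else if (j : ℕ) = p + 1 then ab.2 else v j) = w j)
      ↔ (ab = (w ⟨p, hp'⟩, w ⟨p+1, hp⟩) ∧
          (∀ j : Fin k, (j : ℕ) ≠ p → (j : ℕ) ≠ p + 1 → (j : ℕ) ≠ m →
            v j = w j)) := by
    intro ab
    constructor
    · intro hc
      have e1 := hc ⟨p, hp'⟩ (by simpa using fun h => d1 h.symm)
      have e2 := hc ⟨p+1, hp⟩ (by simpa using fun h => d2 h.symm)
      simp at e1 e2
      refine ⟨Prod.ext e1 e2, fun j h1 h2 h3 => ?_⟩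
      have := hc j h3
      simpa [h1, h2] using this
    · rintro ⟨rfl, hd⟩
      intro j h3
      by_cases h1 : (j : ℕ) = p
      · simp only [if_pos h1]
        have hj : j = ⟨p, hp'⟩ := Fin.ext h1
        rw [hj]
      · by_cases h2 : (j : ℕ) = p + 1
        · simp only [if_neg h1, if_pos h2]
          have hj : j = ⟨p+1, hp⟩ := Fin.ext h2
          rw [hj]
        · simp only [if_neg h1, if_neg h2]
          exact hd j h1 h2 h3
  rw [Finset.sum_eq_single (w ⟨p, hp'⟩, w ⟨p+1, hp⟩)
    (fun ab _ hne => by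
      simp only [if_neg (fun hC => hne (((c2 ab).1 hC).1)), mul_zero])
    (fun habs => absurd (Finset.mem_univ _) habs)]
  simp only [if_pos (c1 (w ⟨p, hp'⟩, w ⟨p+1, hp⟩)), mul_one,
    if_congr ((c2 (w ⟨p, hp'⟩, w ⟨p+1, hp⟩)).trans (and_iff_right rfl)) rfl rfl]
  simp [Fin.ext_iff, show ¬(m = p) by omega, show ¬(m = p+1) by omega,
    show ¬(p+1 = p) by omega]

lemma liftV_mul_lift2_apply (X : Matrix (Fin N × Fin N) (Fin N × Fin N) A)
    (L : Matrix (Fin N) (Fin N) A) {p m : ℕ} (hp : p + 1 < k) (hm : m < k)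
    (d1 : m ≠ p) (d2 : m ≠ p + 1) (v w : Fin k → Fin N) :
    (liftV k L m * lift2 k X p) v w
      = L (v ⟨m, hm⟩) (w ⟨m, hm⟩) *
        (X (v ⟨p, Nat.lt_of_succ_lt hp⟩, v ⟨p+1, hp⟩) (w ⟨p, Nat.lt_of_succ_lt hp⟩, w ⟨p+1, hp⟩) *
          (if ∀ j : Fin k, (j : ℕ) ≠ m → (j : ℕ) ≠ p → (j : ℕ) ≠ p + 1 →
              v j = w j then 1 else 0)) := by
  have hp' : p < k := Nat.lt_of_succ_lt hp
  rw [Matrix.mul_apply]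
  simp only [lift2, liftV, Matrix.of_apply, dif_pos hp, dif_pos hm]
  rw [sum_one_pos hm v
    (fun u => (L (v ⟨m, hm⟩) (u ⟨m, hm⟩) *
        (if ∀ j : Fin k, (j : ℕ) ≠ m → v j = u j then 1 else 0)) *
      (X (u ⟨p, hp'⟩, u ⟨p+1, hp⟩) (w ⟨p, hp'⟩, w ⟨p+1, hp⟩) *
        (if ∀ j : Fin k, (j : ℕ) ≠ p → (j : ℕ) ≠ p + 1 → u j = w j then 1 else 0)))
    (fun u hu => by simp only [if_neg hu, mul_zero, zero_mul])]
  have c1 : ∀ a : Fin N, (∀ j : Fin k, (j : ℕ) ≠ m →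
      v j = if (j : ℕ) = m then a else v j) := by
    intro a j h1
    simp [h1]
  have c2 : ∀ a : Fin N,
      (∀ j : Fin k, (j : ℕ) ≠ p → (j : ℕ) ≠ p + 1 →
        (if (j : ℕ) = m then a else v j) = w j)
      ↔ (a = w ⟨m, hm⟩ ∧
          (∀ j : Fin k, (j : ℕ) ≠ m → (j : ℕ) ≠ p → (j : ℕ) ≠ p + 1 →
            v j = w j)) := by
    intro a
    constructor
    · intro hc
      have e1 := hc ⟨m, hm⟩ (by simpa using d1) (by simpa using d2)
      simp at e1
      refine ⟨e1, fun j h1 h2 h3 => ?_⟩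
      have := hc j h2 h3
      simpa [h1] using this
    · rintro ⟨rfl, hd⟩
      intro j h2 h3
      by_cases h1 : (j : ℕ) = m
      · simp only [if_pos h1]
        have hj : j = ⟨m, hm⟩ := Fin.ext h1
        rw [hj]
      · simp only [if_neg h1]
        exact hd j h1 h2 h3
  rw [Finset.sum_eq_single (w ⟨m, hm⟩)
    (fun a _ hne => by
      simp only [if_neg (fun hC => hne (((c2 a).1 hC).1)), mul_zero])
    (fun habs => absurd (Finset.mem_univ _) habs)]
  simp only [if_pos (c1 (w ⟨m, hm⟩)), mul_one,
    if_congr ((c2 (w ⟨m, hm⟩)).trans (and_iff_right rfl)) rfl rfl]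
  simp [Fin.ext_iff, show ¬(m = p) by omega, show ¬(m = p+1) by omega,
    show ¬(p = m) by omega, show ¬(p+1 = m) by omega]

end closedforms2
section lift3sec
variable {N k : ℕ} {A : Type} [Ring A]

def up12A {N : ℕ} {A : Type} [Ring A] (X : Matrix (Fin N × Fin N) (Fin N × Fin N) A) :
    Matrix (Fin N × Fin N × Fin N) (Fin N × Fin N × Fin N) A :=
  Matrix.of fun p q => X (p.1, p.2.1) (q.1, q.2.1) * (if p.2.2 = q.2.2 then 1 else 0)

def up23A {N : ℕ} {A : Type} [Ring A] (X : Matrix (Fin N × Fin N) (Fin N × Fin N) A) :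
    Matrix (Fin N × Fin N × Fin N) (Fin N × Fin N × Fin N) A :=
  Matrix.of fun p q => (if p.1 = q.1 then 1 else 0) * X (p.2.1, p.2.2) (q.2.1, q.2.2)

def lift3 {N : ℕ} {A : Type} [Ring A] (k : ℕ)
    (X : Matrix (Fin N × Fin N × Fin N) (Fin N × Fin N × Fin N) A) (p : ℕ) :
    Matrix (Fin k → Fin N) (Fin k → Fin N) A :=
  Matrix.of fun v w =>
    if h : p + 2 < k then
      X (v ⟨p, by omega⟩, v ⟨p + 1, by omega⟩, v ⟨p + 2, h⟩)
          (w ⟨p, by omega⟩, w ⟨p + 1, by omega⟩, w ⟨p + 2, h⟩) *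
        (if ∀ j : Fin k, (j : ℕ) ≠ p → (j : ℕ) ≠ p + 1 → (j : ℕ) ≠ p + 2 → v j = w j
          then 1 else 0)
    else (if v = w then 1 else 0)

lemma map_up12 (f : ℂ →+* A) (X : Matrix (Fin N × Fin N) (Fin N × Fin N) ℂ) :
    (up12 X).map f = up12A (X.map f) := by
  ext v w
  simp only [up12, up12A, Matrix.map_apply, Matrix.of_apply]
  split_ifs <;> simp

lemma map_up23 (f : ℂ →+* A) (X : Matrix (Fin N × Fin N) (Fin N × Fin N) ℂ) :
    (up23 X).map f = up23A (X.map f) := by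
  ext v w
  simp only [up23, up23A, Matrix.map_apply, Matrix.of_apply]
  split_ifs <;> simp

lemma lift3_up12A (X : Matrix (Fin N × Fin N) (Fin N × Fin N) A) {p : ℕ} (h : p + 2 < k) :
    lift3 k (up12A X) p = lift2 k X p := by
  have h1 : p + 1 < k := by omega
  have hp : p < k := by omega
  ext v w
  simp only [lift3, lift2, up12A, Matrix.of_apply, dif_pos h, dif_pos h1]
  rw [mul_assoc]
  congr 1
  by_cases c : v ⟨p+2, h⟩ = w ⟨p+2, h⟩
  · by_cases d : (∀ j : Fin k, (j : ℕ) ≠ p → (j : ℕ) ≠ p + 1 → (j : ℕ) ≠ p + 2 → v j = w j)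
    · rw [if_pos c, if_pos d, one_mul, if_pos]
      intro j hj1 hj2
      by_cases hj3 : (j : ℕ) = p + 2
      · have hj : j = ⟨p+2, h⟩ := Fin.ext hj3
        rw [hj]; exact c
      · exact d j hj1 hj2 hj3
    · rw [if_pos c, if_neg d, one_mul, if_neg]
      intro hc
      exact d fun j hj1 hj2 _ => hc j hj1 hj2
  · rw [if_neg c, zero_mul, if_neg]
    intro hc
    exact c (hc ⟨p+2, h⟩ (show p+2 ≠ p by omega) (show p+2 ≠ p+1 by omega))

lemma lift3_up23A (X : Matrix (Fin N × Fin N) (Fin N × Fin N) A) {p : ℕ} (h : p + 2 < k) :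
    lift3 k (up23A X) p = lift2 k X (p + 1) := by
  have h1 : p + 1 < k := by omega
  have hp : p < k := by omega
  ext v w
  simp only [lift3, lift2, up23A, Matrix.of_apply, dif_pos h,
    dif_pos (show p + 1 + 1 < k by omega)]
  by_cases c : v ⟨p, hp⟩ = w ⟨p, hp⟩
  · rw [if_pos c, one_mul]
    have hite : (if ∀ j : Fin k, (j : ℕ) ≠ p → (j : ℕ) ≠ p + 1 → (j : ℕ) ≠ p + 2 → v j = w j
        then (1:A) else 0)
        = if ∀ j : Fin k, (j : ℕ) ≠ p + 1 → (j : ℕ) ≠ p + 1 + 1 → v j = w j then 1 else 0 := by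
      refine if_congr ⟨fun d j hj1 hj2 => ?_, fun d j hj1 hj2 hj3 => d j hj2 (by omega)⟩ rfl rfl
      by_cases hj : (j : ℕ) = p
      · have hjj : j = ⟨p, hp⟩ := Fin.ext hj
        rw [hjj]; exact c
      · exact d j hj hj1 (by omega)
    rw [hite]
  · rw [if_neg c, zero_mul, zero_mul]
    rw [if_neg (show ¬(∀ j : Fin k, (j : ℕ) ≠ p + 1 → (j : ℕ) ≠ p + 1 + 1 → v j = w j) from
      fun hc => c (hc ⟨p, hp⟩ (show p ≠ p + 1 by omega) (show p ≠ p + 1 + 1 by omega))), mul_zero]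

lemma liftV_zero_eq (L : Matrix (Fin N) (Fin N) A) (h : 1 < k) :
    liftV k L 0 = lift2 k (lift1 L) 0 := by
  have h0 : (0:ℕ) < k := by omega
  ext v w
  simp only [liftV, lift2, lift1, Matrix.of_apply, dif_pos h0, dif_pos (show (0:ℕ)+1 < k by omega)]
  rw [mul_assoc]
  congr 1
  by_cases c : v ⟨1, by omega⟩ = w ⟨1, by omega⟩
  · by_cases d : (∀ j : Fin k, (j : ℕ) ≠ 0 → (j : ℕ) ≠ 0 + 1 → v j = w j)
    · rw [if_pos c, if_pos d, one_mul, if_pos]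
      intro j hj1
      by_cases hj2 : (j : ℕ) = 1
      · have hj : j = ⟨1, by omega⟩ := Fin.ext hj2
        rw [hj]; exact c
      · exact d j hj1 (by omega)
    · rw [if_pos c, if_neg d, one_mul, if_neg]
      intro hc
      exact d fun j hj1 _ => hc j hj1
  · rw [if_neg c, zero_mul, if_neg]
    intro hc
    exact c (hc ⟨1, by omega⟩ (by simp))

lemma lift3_mul (X Y : Matrix (Fin N × Fin N × Fin N) (Fin N × Fin N × Fin N) A) (p : ℕ)
    (h : p + 2 < k) :
    lift3 k (X * Y) p = lift3 k X p * lift3 k Y p := by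
  have hp : p < k := by omega
  have hp1 : p + 1 < k := by omega
  ext v w
  rw [Matrix.mul_apply]
  simp only [lift3, Matrix.of_apply, dif_pos h]
  rw [sum_three_pos h v
    (fun u => (X (v ⟨p, hp⟩, v ⟨p+1, hp1⟩, v ⟨p+2, h⟩) (u ⟨p, hp⟩, u ⟨p+1, hp1⟩, u ⟨p+2, h⟩) *
        (if ∀ j : Fin k, (j : ℕ) ≠ p → (j : ℕ) ≠ p + 1 → (j : ℕ) ≠ p + 2 → v j = u j then 1 else 0)) *
      (Y (u ⟨p, hp⟩, u ⟨p+1, hp1⟩, u ⟨p+2, h⟩) (w ⟨p, hp⟩, w ⟨p+1, hp1⟩, w ⟨p+2, h⟩) *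
        (if ∀ j : Fin k, (j : ℕ) ≠ p → (j : ℕ) ≠ p + 1 → (j : ℕ) ≠ p + 2 → u j = w j then 1 else 0)))
    (fun u hu => by simp only [if_neg hu, mul_zero, zero_mul])]
  rw [Matrix.mul_apply, Finset.sum_mul]
  refine Finset.sum_congr rfl fun ab _ => ?_
  have c1 : (∀ j : Fin k, (j : ℕ) ≠ p → (j : ℕ) ≠ p + 1 → (j : ℕ) ≠ p + 2 →
      v j = if (j : ℕ) = p then ab.1 else if (j : ℕ) = p + 1 then ab.2.1
        else if (j : ℕ) = p + 2 then ab.2.2 else v j) := by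
    intro j h1 h2 h3
    simp [h1, h2, h3]
  have c2 : (∀ j : Fin k, (j : ℕ) ≠ p → (j : ℕ) ≠ p + 1 → (j : ℕ) ≠ p + 2 →
      (if (j : ℕ) = p then ab.1 else if (j : ℕ) = p + 1 then ab.2.1
        else if (j : ℕ) = p + 2 then ab.2.2 else v j) = w j)
      ↔ (∀ j : Fin k, (j : ℕ) ≠ p → (j : ℕ) ≠ p + 1 → (j : ℕ) ≠ p + 2 → v j = w j) := by
    constructor
    · intro hq j h1 h2 h3
      have := hq j h1 h2 h3
      simpa [h1, h2, h3] using this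
    · intro hq j h1 h2 h3
      simpa [h1, h2, h3] using hq j h1 h2 h3
  simp only [if_true, if_neg (show ¬(p + 1 = p) by omega),
    if_neg (show ¬(p + 2 = p) by omega), if_neg (show ¬(p + 2 = p + 1) by omega),
    if_pos c1, if_congr c2 rfl rfl, mul_one, Prod.mk.eta, mul_assoc]

end lift3sec
section monoidlemmas
variable {M : Type} [Monoid M]

private lemma canX {a b : M} (h : a * b = 1) : ∀ x : M, a * (b * x) = x := fun x => by
  rw [← mul_assoc, h, one_mul]

private lemma swapX {a b : M} (h : a * b = b * a) : ∀ x : M, a * (b * x) = b * (a * x) :=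
  fun x => by rw [← mul_assoc, h, mul_assoc]

/-- reflection equation induction step, as a pure monoid computation -/
lemma REL_step_mon {r r' s s' u : M}
    (hrr' : r * r' = 1) (hr'r : r' * r = 1) (hss' : s * s' = 1) (hs's : s' * s = 1)
    (b1 : r * s * r = s * r * s)
    (cus : s * u = u * s) (cus' : s' * u = u * s')
    (ih : r * u * r * u = u * r * u * r) :
    s * (r' * u * r) * s * (r' * u * r) = r' * u * r * s * (r' * u * r) * s := by
  have b1X : ∀ x : M, r * (s * (r * x)) = s * (r * (s * x)) := fun x => by
    rw [← mul_assoc, ← mul_assoc, b1, mul_assoc, mul_assoc]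
  have b1e : r * (s * r) = s * (r * s) := by
    rw [← mul_assoc, b1, mul_assoc]
  have c1' : r * (s * r') = s' * (r * s) := by
    have h1 : s * (r * (s * r')) = r * s := by
      rw [← mul_assoc, ← mul_assoc, ← b1, mul_assoc, mul_assoc, hrr', mul_one]
    calc r * (s * r') = s' * (s * (r * (s * r'))) := (canX hs's _).symm
      _ = s' * (r * s) := by rw [h1]
  have c1'X : ∀ x : M, r * (s * (r' * x)) = s' * (r * (s * x)) := fun x => by
    rw [← mul_assoc, ← mul_assoc, show r * s * r' = s' * (r * s) by
      rw [mul_assoc]; exact c1', mul_assoc, mul_assoc]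
  have b3 : s * (r' * s') = r' * (s' * r) := by
    have h1 : r * (s * (r' * s')) = s' * r := by
      rw [c1'X, hss', mul_one]
    have h2 : r * (r' * (s' * r)) = s' * r := canX hrr' _
    calc s * (r' * s') = r' * (r * (s * (r' * s'))) := (canX hr'r _).symm
      _ = r' * (r * (r' * (s' * r))) := by rw [h1, h2]
      _ = r' * (s' * r) := by rw [canX hrr']
  have b3X : ∀ x : M, s * (r' * (s' * x)) = r' * (s' * (r * x)) := fun x => by
    rw [← mul_assoc, ← mul_assoc, show s * r' * s' = r' * (s' * r) by
      rw [mul_assoc]; exact b3, mul_assoc, mul_assoc]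
  have ihX : ∀ x : M, r * (u * (r * (u * x))) = u * (r * (u * (r * x))) := fun x => by
    rw [← mul_assoc, ← mul_assoc, ← mul_assoc, ih, mul_assoc, mul_assoc, mul_assoc]
  have cusX := swapX cus
  have cus'X : ∀ x : M, u * (s' * x) = s' * (u * x) := swapX cus'.symm
  simp only [mul_assoc]
  rw [c1'X, cus'X, cusX, b3X, ihX, b1e]
  rw [c1'X, cus'X, cusX]

/-- base case of the transfer lemma -/
lemma T_base_mon {r r' u : M} (hrr' : r * r' = 1) (hr'r : r' * r = 1)
    (rel : r * u * r * u = u * r * u * r) :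
    u * (r * u * r') = r' * u * r * u := by
  have relX : ∀ x : M, r * (u * (r * (u * x))) = u * (r * (u * (r * x))) := fun x => by
    rw [← mul_assoc, ← mul_assoc, ← mul_assoc, rel, mul_assoc, mul_assoc, mul_assoc]
  have h1 : r * (u * (r * (u * r'))) = u * (r * u) := by
    rw [relX, hrr', mul_one]
  calc u * (r * u * r') = r' * (r * (u * (r * (u * r')))) := by
        rw [canX hr'r]; simp only [mul_assoc]
    _ = r' * (u * (r * u)) := by rw [h1]
    _ = r' * u * r * u := by simp only [mul_assoc]

/-- induction step of the transfer lemma -/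
lemma T_step_mon {s s' u1 P B : M} (hss' : s * s' = 1) (hs's : s' * s = 1)
    (cPs : s * P = P * s) (cPs' : s' * P = P * s')
    (ih : P * B = u1 * P)
    (rel : s * u1 * s * u1 = u1 * s * u1 * s) :
    u1 * P * (s * B * s') = s' * u1 * s * (u1 * P) := by
  have relX : ∀ x : M, s * (u1 * (s * (u1 * x))) = u1 * (s * (u1 * (s * x))) := fun x => by
    rw [← mul_assoc, ← mul_assoc, ← mul_assoc, rel, mul_assoc, mul_assoc, mul_assoc]
  have cPsX : ∀ x : M, P * (s * x) = s * (P * x) := swapX cPs.symm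
  have ihX : ∀ x : M, P * (B * x) = u1 * (P * x) := fun x => by
    rw [← mul_assoc, ih, mul_assoc]
  simp only [mul_assoc]
  rw [cPsX, ihX, ← cPs']
  calc u1 * (s * (u1 * (s' * P))) = s' * (s * (u1 * (s * (u1 * (s' * P))))) := by
        rw [canX hs's]
    _ = s' * (u1 * (s * (u1 * (s * (s' * P))))) := by rw [relX]
    _ = s' * (u1 * (s * (u1 * P))) := by rw [canX hss']

/-- turning the reflection equation around with inverses -/
lemma left_right_mon {w l r : M} (hl : l * w = 1) (hr : w * r = 1) : l = r := by
  rw [← one_mul r, ← hl, mul_assoc, hr, mul_one]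

end monoidlemmas
section assembly
variable {N k : ℕ} {A : Type} [Ring A]

lemma lift2_comm_lift2 (X Y : Matrix (Fin N × Fin N) (Fin N × Fin N) A) {p q : ℕ}
    (hpq : p + 2 ≤ q) (hc : ∀ a b c d, Commute (X a b) (Y c d)) :
    lift2 k X p * lift2 k Y q = lift2 k Y q * lift2 k X p := by
  by_cases hq : q + 1 < k
  · have hp : p + 1 < k := by omega
    ext v w
    rw [lift2_mul_lift2_apply X Y hp hq (by omega) (by omega) (by omega) v w,
        lift2_mul_lift2_apply Y X hq hp (by omega) (by omega) (by omega) v w]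
    have hiff : (∀ j : Fin k, (j:ℕ) ≠ q → (j:ℕ) ≠ q+1 → (j:ℕ) ≠ p → (j:ℕ) ≠ p+1 → v j = w j)
        ↔ (∀ j : Fin k, (j:ℕ) ≠ p → (j:ℕ) ≠ p+1 → (j:ℕ) ≠ q → (j:ℕ) ≠ q+1 → v j = w j) :=
      ⟨fun h j a b c d => h j c d a b, fun h j a b c d => h j c d a b⟩
    rw [if_congr hiff rfl rfl, ← mul_assoc, ← mul_assoc, (hc _ _ _ _).eq]
  · rw [lift2_triv Y hq, mul_one, one_mul]

lemma lift2_comm_liftV (X : Matrix (Fin N × Fin N) (Fin N × Fin N) A)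
    (L : Matrix (Fin N) (Fin N) A) {p m : ℕ} (hm : m < k) (d1 : m ≠ p) (d2 : m ≠ p + 1)
    (hc : ∀ a b c d, Commute (X a b) (L c d)) :
    lift2 k X p * liftV k L m = liftV k L m * lift2 k X p := by
  by_cases hp : p + 1 < k
  · ext v w
    rw [lift2_mul_liftV_apply X L hp hm d1 d2 v w, liftV_mul_lift2_apply X L hp hm d1 d2 v w]
    have hiff : (∀ j : Fin k, (j:ℕ) ≠ m → (j:ℕ) ≠ p → (j:ℕ) ≠ p+1 → v j = w j)
        ↔ (∀ j : Fin k, (j:ℕ) ≠ p → (j:ℕ) ≠ p+1 → (j:ℕ) ≠ m → v j = w j) :=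
      ⟨fun h j a b c => h j c a b, fun h j a b c => h j b c a⟩
    rw [if_congr hiff rfl rfl, ← mul_assoc, ← mul_assoc, (hc _ _ _ _).eq]
  · rw [lift2_triv X hp, mul_one, one_mul]

variable (RA RinvA : Matrix (Fin N × Fin N) (Fin N × Fin N) A) (L : Matrix (Fin N) (Fin N) A)

lemma lift2_inv1 (hinv1 : RA * RinvA = 1) (n : ℕ) :
    lift2 k RA n * lift2 k RinvA n = 1 := by
  rw [← lift2_mul, hinv1, lift2_one]

lemma braidn (hbr : up12A RA * up23A RA * up12A RA = up23A RA * up12A RA * up23A RA)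
    {n : ℕ} (h : n + 2 < k) :
    lift2 k RA n * lift2 k RA (n+1) * lift2 k RA n
      = lift2 k RA (n+1) * lift2 k RA n * lift2 k RA (n+1) := by
  rw [← lift3_up12A RA h, ← lift3_up23A RA h, ← lift3_mul _ _ _ h, ← lift3_mul _ _ _ h,
    hbr, lift3_mul _ _ _ h, lift3_mul _ _ _ h]

lemma commLund (hk : 0 < k) (X : Matrix (Fin N × Fin N) (Fin N × Fin N) A)
    (hcX : ∀ a b (x : A), Commute (X a b) x) :
    ∀ n q : ℕ, n < q → lift2 k X q * Lund k RA RinvA L n = Lund k RA RinvA L n * lift2 k X q := by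
  intro n
  induction n with
  | zero =>
    intro q hq
    show lift2 k X q * liftV k L 0 = liftV k L 0 * lift2 k X q
    exact lift2_comm_liftV X L hk (by omega) (by omega) (fun a b c d => hcX a b _)
  | succ n ih =>
    intro q hq
    show lift2 k X q * (lift2 k RinvA n * Lund k RA RinvA L n * lift2 k RA n) = _
    have c1 : Commute (lift2 k X q) (lift2 k RinvA n) :=
      (lift2_comm_lift2 RinvA X (by omega) (fun a b c d => (hcX c d _).symm)).symm
    have c2 : Commute (lift2 k X q) (Lund k RA RinvA L n) := ih q (by omega)
    have c3 : Commute (lift2 k X q) (lift2 k RA n) :=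
      (lift2_comm_lift2 RA X (by omega) (fun a b c d => (hcX c d _).symm)).symm
    exact ((c1.mul_right c2).mul_right c3).eq

lemma commLundProd (hk : 0 < k) (X : Matrix (Fin N × Fin N) (Fin N × Fin N) A)
    (hcX : ∀ a b (x : A), Commute (X a b) x) :
    ∀ n q : ℕ, n < q →
      lift2 k X q * LundProd k RA RinvA L n = LundProd k RA RinvA L n * lift2 k X q := by
  intro n
  induction n with
  | zero =>
    intro q hq
    show lift2 k X q * Lund k RA RinvA L 0 = Lund k RA RinvA L 0 * lift2 k X q
    exact commLund RA RinvA L hk X hcX 0 q hq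
  | succ n ih =>
    intro q hq
    show lift2 k X q * (Lund k RA RinvA L (n+1) * LundProd k RA RinvA L n) = _
    have c1 : Commute (lift2 k X q) (Lund k RA RinvA L (n+1)) :=
      commLund RA RinvA L hk X hcX (n+1) q hq
    have c2 : Commute (lift2 k X q) (LundProd k RA RinvA L n) := ih q (by omega)
    exact (c1.mul_right c2).eq

lemma RELn (hk : 0 < k)
    (hcRA : ∀ a b (x : A), Commute (RA a b) x)
    (hcRinv : ∀ a b (x : A), Commute (RinvA a b) x)
    (hinv1 : RA * RinvA = 1) (hinv2 : RinvA * RA = 1)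
    (hbr : up12A RA * up23A RA * up12A RA = up23A RA * up12A RA * up23A RA)
    (hre : RA * lift1 L * RA * lift1 L = lift1 L * RA * lift1 L * RA) :
    ∀ n : ℕ, lift2 k RA n * Lund k RA RinvA L n * lift2 k RA n * Lund k RA RinvA L n
      = Lund k RA RinvA L n * lift2 k RA n * Lund k RA RinvA L n * lift2 k RA n := by
  intro n
  induction n with
  | zero =>
    by_cases hk2 : 1 < k
    · have h := congrArg (fun M => lift2 k M 0) hre
      simp only [lift2_mul] at h
      show lift2 k RA 0 * liftV k L 0 * lift2 k RA 0 * liftV k L 0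
        = liftV k L 0 * lift2 k RA 0 * liftV k L 0 * lift2 k RA 0
      rw [liftV_zero_eq L hk2]
      exact h
    · rw [lift2_triv RA (show ¬ (0 + 1 < k) by omega)]
      simp only [mul_one, one_mul]
  | succ n ih =>
    by_cases h : n + 2 < k
    · show lift2 k RA (n+1) * (lift2 k RinvA n * Lund k RA RinvA L n * lift2 k RA n) *
          lift2 k RA (n+1) * (lift2 k RinvA n * Lund k RA RinvA L n * lift2 k RA n) = _
      exact REL_step_mon (lift2_inv1 RA RinvA hinv1 n) (lift2_inv1 RinvA RA hinv2 n)
        (lift2_inv1 RA RinvA hinv1 (n+1)) (lift2_inv1 RinvA RA hinv2 (n+1))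
        (braidn RA hbr h)
        (commLund RA RinvA L hk RA hcRA n (n+1) (by omega))
        (commLund RA RinvA L hk RinvA hcRinv n (n+1) (by omega))
        ih
    · rw [lift2_triv RA (show ¬ (n + 1 + 1 < k) by omega)]
      simp only [mul_one, one_mul]

lemma Tn (hk : 0 < k)
    (hcRA : ∀ a b (x : A), Commute (RA a b) x)
    (hcRinv : ∀ a b (x : A), Commute (RinvA a b) x)
    (hinv1 : RA * RinvA = 1) (hinv2 : RinvA * RA = 1)
    (hbr : up12A RA * up23A RA * up12A RA = up23A RA * up12A RA * up23A RA)
    (hre : RA * lift1 L * RA * lift1 L = lift1 L * RA * lift1 L * RA) :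
    ∀ n : ℕ, LundProd k RA RinvA L n * Lbar k RA RinvA L (n+1)
      = Lund k RA RinvA L (n+1) * LundProd k RA RinvA L n := by
  intro n
  induction n with
  | zero =>
    show Lund k RA RinvA L 0 * (lift2 k RA 0 * Lbar k RA RinvA L 0 * lift2 k RinvA 0)
      = lift2 k RinvA 0 * Lund k RA RinvA L 0 * lift2 k RA 0 * Lund k RA RinvA L 0
    have rel := RELn RA RinvA L hk hcRA hcRinv hinv1 hinv2 hbr hre 0
    exact T_base_mon (lift2_inv1 RA RinvA hinv1 0) (lift2_inv1 RinvA RA hinv2 0) rel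
  | succ n ih =>
    show Lund k RA RinvA L (n+1) * LundProd k RA RinvA L n *
        (lift2 k RA (n+1) * Lbar k RA RinvA L (n+1) * lift2 k RinvA (n+1))
      = lift2 k RinvA (n+1) * Lund k RA RinvA L (n+1) * lift2 k RA (n+1) *
        (Lund k RA RinvA L (n+1) * LundProd k RA RinvA L n)
    exact T_step_mon (lift2_inv1 RA RinvA hinv1 (n+1)) (lift2_inv1 RinvA RA hinv2 (n+1))
      (commLundProd RA RinvA L hk RA hcRA n (n+1) (by omega))
      (commLundProd RA RinvA L hk RinvA hcRinv n (n+1) (by omega))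
      ih
      (RELn RA RinvA L hk hcRA hcRinv hinv1 hinv2 hbr hre (n+1))

lemma mainProd (hk : 0 < k)
    (hcRA : ∀ a b (x : A), Commute (RA a b) x)
    (hcRinv : ∀ a b (x : A), Commute (RinvA a b) x)
    (hinv1 : RA * RinvA = 1) (hinv2 : RinvA * RA = 1)
    (hbr : up12A RA * up23A RA * up12A RA = up23A RA * up12A RA * up23A RA)
    (hre : RA * lift1 L * RA * lift1 L = lift1 L * RA * lift1 L * RA) :
    ∀ n : ℕ, LbarProd k RA RinvA L n = LundProd k RA RinvA L n := by
  intro n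
  induction n with
  | zero => rfl
  | succ n ih =>
    show LbarProd k RA RinvA L n * Lbar k RA RinvA L (n+1)
      = Lund k RA RinvA L (n+1) * LundProd k RA RinvA L n
    rw [ih]
    exact Tn RA RinvA L hk hcRA hcRinv hinv1 hinv2 hbr hre n

end assembly

/-- If `L` satisfies the reflection equation, then for every `k ≥ 1` the two
ordered products of copies coincide:
`L_{1̄} L_{2̄} ⋯ L_{k̄} = L_{k̲} L_{k−1̲} ⋯ L_{1̲}` in `Mat_{N^k}(A)`. -/
theorem barProd_eq_undProd (N : ℕ) (hN : 1 ≤ N)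
    (R Rinv : Matrix (Fin N × Fin N) (Fin N × Fin N) ℂ)
    (hYB : up12 R * up23 R * up12 R = up23 R * up12 R * up23 R)
    (hRinv : R * Rinv = 1 ∧ Rinv * R = 1)
    (A : Type) [Ring A] [Algebra ℂ A] (L : Matrix (Fin N) (Fin N) A)
    (hRE : R.map (algebraMap ℂ A) * lift1 L * R.map (algebraMap ℂ A) * lift1 L
      = lift1 L * R.map (algebraMap ℂ A) * lift1 L * R.map (algebraMap ℂ A)) :
    ∀ k : ℕ, 1 ≤ k →
      LbarProd k (R.map (algebraMap ℂ A)) (Rinv.map (algebraMap ℂ A)) L (k - 1)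
        = LundProd k (R.map (algebraMap ℂ A)) (Rinv.map (algebraMap ℂ A)) L (k - 1) := by
  intro k hk
  set f := algebraMap ℂ A with hf
  have hcRA : ∀ a b (x : A), Commute ((R.map f) a b) x := fun a b x => by
    show (R.map f) a b * x = x * (R.map f) a b
    rw [Matrix.map_apply]
    exact Algebra.commutes (R a b) x
  have hcRinv : ∀ a b (x : A), Commute ((Rinv.map f) a b) x := fun a b x => by
    show (Rinv.map f) a b * x = x * (Rinv.map f) a b
    rw [Matrix.map_apply]
    exact Algebra.commutes (Rinv a b) x
  have hmap_one : (1 : Matrix (Fin N × Fin N) (Fin N × Fin N) ℂ).map f = 1 :=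
    Matrix.map_one f (map_zero f) (map_one f)
  have hinv1 : R.map f * Rinv.map f = 1 := by
    rw [← Matrix.map_mul, hRinv.1, hmap_one]
  have hinv2 : Rinv.map f * R.map f = 1 := by
    rw [← Matrix.map_mul, hRinv.2, hmap_one]
  have hbr : up12A (R.map f) * up23A (R.map f) * up12A (R.map f)
      = up23A (R.map f) * up12A (R.map f) * up23A (R.map f) := by
    have h := congrArg (fun M => M.map f) hYB
    simpa only [Matrix.map_mul, map_up12, map_up23] using h
  exact mainProd (R.map f) (Rinv.map f) L (by omega) hcRA hcRinv hinv1 hinv2 hbr hRE (k - 1)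
end

section
/- Let R be an R-matrix on V⊗V, V = ℂ^N, let A be an associative unital ℂ-algebra, let η ∈ ℂ∖{0}, and let L, M ∈ Mat_N(A) be invertible matrices over A (i.e., possessing two-sided inverses L⁻¹, M⁻¹ ∈ Mat_N(A)) satisfying: (i) R₁L₁R₁L₁ = L₁R₁L₁R₁; (ii) R₁M₁R₁M₁ = M₁R₁M₁R₁; (iii) R₁L₁R₁M₁ = η·M₁R₁L₁R₁⁻¹. Then the matrix Q := L M⁻¹ L⁻¹ M satisfies: R₁Q₁R₁Q₁ = Q₁R₁Q₁R₁ and R₁Q₁R₁M₁ = M₁R₁Q₁R₁ in Mat_{N²}(A). -/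
open Matrix BigOperators

lemma lift1_mul {N : ℕ} {A : Type} [Ring A] (X Y : Matrix (Fin N) (Fin N) A) :
    lift1 (X * Y) = lift1 X * lift1 Y := by
  ext ⟨i, a⟩ ⟨j, b⟩
  simp [lift1, Matrix.mul_apply, Fintype.sum_prod_type, mul_ite, ite_mul,
    Finset.sum_ite_eq, Finset.sum_mul, Finset.mul_sum]

lemma lift1_one {N : ℕ} {A : Type} [Ring A] : lift1 (1 : Matrix (Fin N) (Fin N) A) = 1 := by
  ext ⟨i, a⟩ ⟨j, b⟩
  simp only [lift1, Matrix.of_apply, Matrix.one_apply, Prod.ext_iff]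
  by_cases h : i = j <;> by_cases h2 : a = b <;> simp [h, h2]

lemma key {B : Type*} [Ring B] [Module ℂ B] [SMulCommClass ℂ B B] [IsScalarTower ℂ B B]
    (η : ℂ) (hη : η ≠ 0) (r r' l l' m m' : B)
    (hrr : r * r' = 1) (hr'r : r' * r = 1)
    (hll : l * l' = 1) (hl'l : l' * l = 1)
    (hmm : m * m' = 1) (hm'm : m' * m = 1)
    (h1 : r*l*r*l = l*r*l*r)
    (h2 : r*m*r*m = m*r*m*r)
    (h3 : r*l*r*m = η • (m*r*l*r')) :
    (r*(l*(m'*(l'*(m*(r*(l*(m'*(l'*m)))))))) = l*(m'*(l'*(m*(r*(l*(m'*(l'*(m*r)))))))))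
    ∧ (r*(l*(m'*(l'*(m*(r*m))))) = m*(r*(l*(m'*(l'*(m*r)))))) := by
  have hrx : ∀ x : B, r * (r' * x) = x := fun x => by rw [← mul_assoc, hrr, one_mul]
  have hr'x : ∀ x : B, r' * (r * x) = x := fun x => by rw [← mul_assoc, hr'r, one_mul]
  have hlx : ∀ x : B, l * (l' * x) = x := fun x => by rw [← mul_assoc, hll, one_mul]
  have hl'x : ∀ x : B, l' * (l * x) = x := fun x => by rw [← mul_assoc, hl'l, one_mul]
  have hmx : ∀ x : B, m * (m' * x) = x := fun x => by rw [← mul_assoc, hmm, one_mul]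
  have hm'x : ∀ x : B, m' * (m * x) = x := fun x => by rw [← mul_assoc, hm'm, one_mul]
  have h1x : ∀ x : B, r*(l*(r*(l*x))) = l*(r*(l*(r*x))) := fun x => by
    calc r*(l*(r*(l*x))) = (r*l*r*l)*x := by simp only [mul_assoc]
      _ = (l*r*l*r)*x := by rw [h1]
      _ = l*(r*(l*(r*x))) := by simp only [mul_assoc]
  have h2x : ∀ x : B, r*(m*(r*(m*x))) = m*(r*(m*(r*x))) := fun x => by
    calc r*(m*(r*(m*x))) = (r*m*r*m)*x := by simp only [mul_assoc]
      _ = (m*r*m*r)*x := by rw [h2]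
      _ = m*(r*(m*(r*x))) := by simp only [mul_assoc]
  have h3x : ∀ x : B, r*(l*(r*(m*x))) = η • (m*(r*(l*(r'*x)))) := fun x => by
    calc r*(l*(r*(m*x))) = (r*l*r*m)*x := by simp only [mul_assoc]
      _ = (η • (m*r*l*r'))*x := by rw [h3]
      _ = η • (m*(r*(l*(r'*x)))) := by simp only [smul_mul_assoc, mul_assoc]
  have E1x : ∀ x : B, r*(l*(r*(m*(r*x)))) = η • (m*(r*(l*x))) := fun x => by
    rw [h3x (r*x), hr'x x]
  have D1x : ∀ x : B, m*(r*(l*x)) = η⁻¹ • (r*(l*(r*(m*(r*x))))) := fun x => by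
    rw [E1x x, smul_smul, inv_mul_cancel₀ hη, one_smul]
  have D4x : ∀ x : B, l'*(r'*(m*(r*x))) = η⁻¹ • (r*(m*(r*(l'*x)))) := by
    intro x
    have h : η • (l'*(r'*(m*(r*x)))) = r*(m*(r*(l'*x))) := by
      conv_lhs => rw [← hlx x]
      conv_lhs => rw [D1x (l'*x)]
      simp only [mul_smul_comm, smul_smul]
      rw [mul_inv_cancel₀ hη, one_smul, hr'x, hl'x]
    rw [← h, smul_smul, inv_mul_cancel₀ hη, one_smul]
  have D5x : ∀ x : B, m'*(r*(l*(r*x))) = η • (r*(l*(r'*(m'*x)))) := by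
    intro x
    conv_lhs => rw [← hmx x]
    rw [h3x (m'*x), mul_smul_comm, hm'x]
  have C1x : ∀ x : B, l'*(r*(l*(r*x))) = r*(l*(r*(l'*x))) := by
    intro x
    conv_lhs => rw [← hlx x]
    rw [h1x (l'*x), hl'x]
  have C2x : ∀ x : B, m'*(r*(m*(r*x))) = r*(m*(r*(m'*x))) := by
    intro x
    conv_lhs => rw [← hmx x]
    rw [h2x (m'*x), hm'x]
  have h1r'x : ∀ x : B, r*(l*(r*(l*(r'*x)))) = l*(r*(l*x)) := fun x => by
    rw [h1x (r'*x), hrx x]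
  have step2x : ∀ x : B, m*(r*(m*x)) = r'*(m*(r*(m*(r*x)))) := fun x => by
    rw [← h2x x, hr'x]
  have G2x : ∀ x : B, r*(l*(m'*(l'*(m*(r*(m*x)))))) = m*(r*(l*(m'*(l'*(m*(r*x)))))) := by
    intro x
    rw [step2x x, D4x (m*(r*x))]
    simp only [mul_smul_comm]
    rw [C2x (l'*(m*(r*x))), E1x (m'*(l'*(m*(r*x)))), smul_smul, inv_mul_cancel₀ hη, one_smul]
  have G1l : ∀ x : B, r*(l*(m'*(l'*(m*(r*(l*x)))))) = l*(r*(l*(m'*(l'*(m*(r*x)))))) := by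
    intro x
    rw [D1x x]
    simp only [mul_smul_comm]
    rw [C1x (m*(r*x)), D5x (l'*(m*(r*x)))]
    simp only [mul_smul_comm, smul_smul]
    rw [inv_mul_cancel₀ hη, one_smul, h1r'x (m'*(l'*(m*(r*x))))]
  have Xm' : ∀ x : B, r*(l*(m'*(l'*(m*(r*(m'*x)))))) = m'*(r*(l*(m'*(l'*(m*(r*x)))))) := by
    intro x
    conv_lhs => rw [← hm'x (r*(l*(m'*(l'*(m*(r*(m'*x)))))))]
    rw [← G2x (m'*x), hmx x]
  have Xl' : ∀ x : B, r*(l*(m'*(l'*(m*(r*(l'*x)))))) = l'*(r*(l*(m'*(l'*(m*(r*x)))))) := by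
    intro x
    conv_lhs => rw [← hl'x (r*(l*(m'*(l'*(m*(r*(l'*x)))))))]
    rw [← G1l (l'*x), hlx x]
  constructor
  · have := G1l (m'*(l'*(m*(1:B))))
    rw [Xm' (l'*(m*(1:B))), Xl' (m*(1:B)), G2x 1] at this
    simpa only [mul_one] using this
  · have := G2x (1:B)
    simpa only [mul_one] using this

/-- In the right-invariant braided differential algebra built from two copies
of the reflection equation algebra, the matrix `Q = L M⁻¹ L⁻¹ M` satisfies the
reflection equation and commutes adjointly with `M`:
`R₁Q₁R₁Q₁ = Q₁R₁Q₁R₁` and `R₁Q₁R₁M₁ = M₁R₁Q₁R₁`. -/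
theorem adjoint_subalgebra_Q (N : ℕ) (hN : 1 ≤ N)
    (R Rinv : Matrix (Fin N × Fin N) (Fin N × Fin N) ℂ)
    (hYB : up12 R * up23 R * up12 R = up23 R * up12 R * up23 R)
    (hRinv : R * Rinv = 1 ∧ Rinv * R = 1)
    (A : Type) [Ring A] [Algebra ℂ A] (η : ℂ) (hη : η ≠ 0)
    (L M Linv Minv : Matrix (Fin N) (Fin N) A)
    (hL : L * Linv = 1 ∧ Linv * L = 1)
    (hM : M * Minv = 1 ∧ Minv * M = 1)
    (hREL : R.map (algebraMap ℂ A) * lift1 L * R.map (algebraMap ℂ A) * lift1 L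
        = lift1 L * R.map (algebraMap ℂ A) * lift1 L * R.map (algebraMap ℂ A))
    (hREM : R.map (algebraMap ℂ A) * lift1 M * R.map (algebraMap ℂ A) * lift1 M
        = lift1 M * R.map (algebraMap ℂ A) * lift1 M * R.map (algebraMap ℂ A))
    (hOFP : R.map (algebraMap ℂ A) * lift1 L * R.map (algebraMap ℂ A) * lift1 M
        = algebraMap ℂ A η
            • (lift1 M * R.map (algebraMap ℂ A) * lift1 L * Rinv.map (algebraMap ℂ A))) :
    (R.map (algebraMap ℂ A) * lift1 (L * Minv * Linv * M) * R.map (algebraMap ℂ A)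
          * lift1 (L * Minv * Linv * M)
        = lift1 (L * Minv * Linv * M) * R.map (algebraMap ℂ A)
          * lift1 (L * Minv * Linv * M) * R.map (algebraMap ℂ A))
      ∧ (R.map (algebraMap ℂ A) * lift1 (L * Minv * Linv * M) * R.map (algebraMap ℂ A)
            * lift1 M
          = lift1 M * R.map (algebraMap ℂ A) * lift1 (L * Minv * Linv * M)
            * R.map (algebraMap ℂ A)) := by
  set r := R.map (algebraMap ℂ A) with hrdef
  set r' := Rinv.map (algebraMap ℂ A) with hr'def
  have hrr : r * r' = 1 := by
    rw [hrdef, hr'def, ← Matrix.map_mul, hRinv.1, Matrix.map_one _ (map_zero _) (map_one _)]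
  have hr'r : r' * r = 1 := by
    rw [hrdef, hr'def, ← Matrix.map_mul, hRinv.2, Matrix.map_one _ (map_zero _) (map_one _)]
  have hll : lift1 L * lift1 Linv = 1 := by rw [← lift1_mul, hL.1, lift1_one]
  have hl'l : lift1 Linv * lift1 L = 1 := by rw [← lift1_mul, hL.2, lift1_one]
  have hmm : lift1 M * lift1 Minv = 1 := by rw [← lift1_mul, hM.1, lift1_one]
  have hm'm : lift1 Minv * lift1 M = 1 := by rw [← lift1_mul, hM.2, lift1_one]
  have hOFP' : r * lift1 L * r * lift1 M = η • (lift1 M * r * lift1 L * r') := by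
    rw [hOFP, algebraMap_smul]
  have hkey := key η hη r r' (lift1 L) (lift1 Linv) (lift1 M) (lift1 Minv)
    hrr hr'r hll hl'l hmm hm'm hREL hREM hOFP'
  rw [lift1_mul, lift1_mul, lift1_mul]
  constructor
  · have := hkey.1
    simp only [mul_assoc]
    simpa only [mul_assoc] using this
  · have := hkey.2
    simp only [mul_assoc]
    simpa only [mul_assoc] using this
end
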